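/- arXiv:2502.16997 — 3 statements merged into one kernel-verified Lean document; each statement's English description precedes it below -/
import Mathlib

section
/- Let M ⊆ I be a subset of cardinality m ≥ 2 of a finite nonempty set I, and let β_M be the canonical M-brunnian family on I. Then the connectivity structure of β_M consists exactly of the empty set, the singletons, and M itself: K_{β_M} = {∅} ∪ {{i} : i ∈ I} ∪ {M} = [{M}]. Equivalently, M is the unique irreducible connected set of K_{β_M} of cardinality ≥ 2. -/
universe u

variable {I : Type u}

/-- `{J₁, J₂}` is a dissociation of `J ⊆ I`: an (unordered) pair of nonempty
disjoint subsets whose union is `J`. -/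
def IsDissociation (J J1 J2 : Set I) : Prop :=
  J1.Nonempty ∧ J2.Nonempty ∧ Disjoint J1 J2 ∧ J1 ∪ J2 = J

/-- `A` contests the dissociation `{J₁, J₂}`. -/
def Contests (A J1 J2 : Set I) : Prop :=
  A ⊆ J1 ∪ J2 ∧ (A ∩ J1).Nonempty ∧ (A ∩ J2).Nonempty

/-- An integral connectivity structure on `I`. -/
def IsConnectivity (𝒦 : Set (Set I)) : Prop :=
  ∅ ∈ 𝒦 ∧ (∀ i : I, ({i} : Set I) ∈ 𝒦) ∧
    ∀ K L : Set I, K ∈ 𝒦 → L ∈ 𝒦 → (K ∩ L).Nonempty → K ∪ L ∈ 𝒦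

/-- The integral connectivity structure generated by `𝒜`. -/
def generated (𝒜 : Set (Set I)) : Set (Set I) :=
  ⋂₀ {𝒦 : Set (Set I) | IsConnectivity 𝒦 ∧ 𝒜 ⊆ 𝒦}

/-- The set `𝒦̃` of irreducible members of `𝒦` with at least two elements. -/
def irred (𝒦 : Set (Set I)) : Set (Set I) :=
  {K | K ∈ 𝒦 ∧ K ∉ generated (𝒦 \ {K}) ∧ 2 ≤ K.ncard}

/-- The sum of two integral connectivity structures: `𝒦₁ ⊕ 𝒦₂ = [𝒦₁ ∪ 𝒦₂]`. -/
def csum (𝒦₁ 𝒦₂ : Set (Set I)) : Set (Set I) := generated (𝒦₁ ∪ 𝒦₂)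

/-- The discrete integral connectivity structure on `I`. -/
def discreteStructure (I : Type u) : Set (Set I) :=
  {(∅ : Set I)} ∪ {A : Set I | ∃ i : I, A = {i}}

/-- `C` is a connected component of `(I, 𝒦)`: a maximal member of `𝒦`. -/
def IsComponent (𝒦 : Set (Set I)) (C : Set I) : Prop :=
  C ∈ 𝒦 ∧ ∀ K ∈ 𝒦, C ⊆ K → K = C

/-- `Γ_𝒜`: subsets of `I` all of whose dissociations are contested by a member of `𝒜`. -/
def Gamma (𝒜 : Set (Set I)) : Set (Set I) :=
  {B | ∀ J1 J2 : Set I, IsDissociation B J1 J2 → ∃ A ∈ 𝒜, Contests A J1 J2}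

/-- A random family on `I`: a finite probability space together with finitely
valued random variables indexed by `I`. -/
structure RandomFamily (I : Type u) where
  Ω : Type
  [fintΩ : Fintype Ω]
  P : Ω → ℝ
  P_nonneg : ∀ ω, 0 ≤ P ω
  P_total : ∑ ω, P ω = 1
  R : I → Type
  [fintR : ∀ i, Fintype (R i)]
  X : ∀ i, Ω → R i

attribute [instance] RandomFamily.fintΩ RandomFamily.fintR

/-- Probability of an event. -/
noncomputable def RandomFamily.prob (φ : RandomFamily I) (E : Set φ.Ω) : ℝ :=
  ∑ ω, E.indicator φ.P ω

/-- `P(X_J = x_J)`. -/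
noncomputable def RandomFamily.probEq (φ : RandomFamily I) (J : Set I)
    (x : ∀ i, φ.R i) : ℝ :=
  φ.prob {ω | ∀ j ∈ J, φ.X j ω = x j}

/-- `φ` respects the dissociation `{J₁, J₂}`:
`P(X_{J₁∪J₂} = x) = P(X_{J₁} = x) · P(X_{J₂} = x)` for all tuples of values. -/
def RandomFamily.Respects (φ : RandomFamily I) (J1 J2 : Set I) : Prop :=
  ∀ x : ∀ i, φ.R i, φ.probEq (J1 ∪ J2) x = φ.probEq J1 x * φ.probEq J2 x

/-- The connectivity structure `K_φ` of a random family: the subsets `J ⊆ I`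
such that `φ` contests every dissociation of `J`. -/
def RandomFamily.Kconn (φ : RandomFamily I) : Set (Set I) :=
  {J | ∀ J1 J2 : Set I, IsDissociation J J1 J2 → ¬ φ.Respects J1 J2}

/-- Tensor product of two random families. -/
noncomputable def RandomFamily.tensor (φ ψ : RandomFamily I) : RandomFamily I where
  Ω := φ.Ω × ψ.Ω
  fintΩ := inferInstance
  P := fun p => φ.P p.1 * ψ.P p.2
  P_nonneg := fun p => mul_nonneg (φ.P_nonneg _) (ψ.P_nonneg _)
  P_total := by
    rw [Fintype.sum_prod_type]
    simp only [← Finset.mul_sum]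
    rw [ψ.P_total]
    simp only [mul_one]
    exact φ.P_total
  R := fun i => φ.R i × ψ.R i
  fintR := fun i => inferInstance
  X := fun i p => (φ.X i p.1, ψ.X i p.2)

/-- Restriction of a random family to a subset `J ⊆ I`. -/
def RandomFamily.restrict (φ : RandomFamily I) (J : Set I) : RandomFamily J where
  Ω := φ.Ω
  fintΩ := inferInstance
  P := φ.P
  P_nonneg := φ.P_nonneg
  P_total := φ.P_total
  R := fun j => φ.R (j : I)
  fintR := fun j => inferInstance
  X := fun j => φ.X (j : I)

/-- The canonical `M`-brunnian family on `I`, for `M` of cardinality `m`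
(with elements listed in increasing order). -/
noncomputable def brunnian [LinearOrder I] (M : Finset I) (m : ℕ) (h : M.card = m) :
    RandomFamily I where
  Ω := Fin (m - 1) → ZMod 2
  fintΩ := inferInstance
  P := fun _ => ((2 : ℝ) ^ (m - 1))⁻¹
  P_nonneg := fun _ => by positivity
  P_total := by
    have hcard : Fintype.card (Fin (m - 1) → ZMod 2) = 2 ^ (m - 1) := by
      rw [Fintype.card_fun]
      simp
    rw [Finset.sum_const, Finset.card_univ, hcard, nsmul_eq_mul]
    push_cast
    exact mul_inv_cancel₀ (by positivity)
  R := fun _ => ZMod 2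
  fintR := fun _ => inferInstance
  X := fun i ω =>
    if hi : i ∈ M then
      if hk : (((M.orderIsoOfFin h).symm ⟨i, hi⟩ : Fin m) : ℕ) < m - 1 then
        ω ⟨_, hk⟩
      else ∑ j, ω j
    else 0
namespace Stmt17Aux

lemma zmod2_add_self (a : ZMod 2) : a + a = 0 := by revert a; decide

lemma zmod2_neg (a : ZMod 2) : -a = a := by revert a; decide

lemma card_cube (n : ℕ) : Nat.card (Fin n → ZMod 2) = 2 ^ n := by
  simp [Nat.card_eq_fintype_card]

lemma key_count {n : ℕ} (p q : (Fin n → ZMod 2) → Prop) (C : Set (Fin n))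
    (hp : ∀ ω ω', (∀ k ∈ C, ω k = ω' k) → (p ω ↔ p ω'))
    (hq : ∀ ω ω', (∀ k ∉ C, ω k = ω' k) → (q ω ↔ q ω')) :
    Nat.card {ω : Fin n → ZMod 2 | p ω ∧ q ω} * 2 ^ n
      = Nat.card {ω : Fin n → ZMod 2 | p ω} * Nat.card {ω : Fin n → ZMod 2 | q ω} := by
  classical
  rw [← card_cube n, ← Nat.card_prod, ← Nat.card_prod]
  apply Nat.card_congr
  refine
    { toFun := fun z =>
        (⟨C.piecewise z.1.1 z.2,
          (hp z.1.1 _ fun k hk => (C.piecewise_eq_of_mem _ _ hk).symm).mp z.1.2.1⟩,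
         ⟨C.piecewise z.2 z.1.1,
          (hq z.1.1 _ fun k hk => (C.piecewise_eq_of_notMem _ _ hk).symm).mp z.1.2.2⟩)
      invFun := fun z =>
        (⟨C.piecewise z.1.1 z.2.1,
          ⟨(hp z.1.1 _ fun k hk => (C.piecewise_eq_of_mem _ _ hk).symm).mp z.1.2,
           (hq z.2.1 _ fun k hk => (C.piecewise_eq_of_notMem _ _ hk).symm).mp z.2.2⟩⟩,
         C.piecewise z.2.1 z.1.1)
      left_inv := ?_
      right_inv := ?_ }
  · rintro ⟨⟨ω, hω⟩, τ⟩
    refine Prod.ext (Subtype.ext ?_) ?_ <;> funext k <;> by_cases hk : k ∈ C <;>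
      simp [Set.piecewise, hk]
  · rintro ⟨⟨σ1, h1⟩, ⟨σ2, h2⟩⟩
    refine Prod.ext (Subtype.ext ?_) (Subtype.ext ?_) <;> funext k <;> by_cases hk : k ∈ C <;>
      simp [Set.piecewise, hk]

end Stmt17Aux
namespace Stmt17Aux

section BrunnianFacts

variable {I : Type u} [LinearOrder I] (M : Finset I) (m : ℕ) (h : M.card = m)

/-- the `k`-th element of `M`, for `k < m - 1`. -/
noncomputable def embE (k : Fin (m - 1)) : I :=
  (M.orderIsoOfFin h ⟨k.1, lt_of_lt_of_le k.2 (Nat.sub_le m 1)⟩ : I)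

/-- the last (`(m-1)`-st) element of `M`. -/
noncomputable def lastE (hm : 0 < m) : I :=
  (M.orderIsoOfFin h ⟨m - 1, Nat.sub_lt hm one_pos⟩ : I)

lemma embE_mem (k : Fin (m - 1)) : embE M m h k ∈ M :=
  (M.orderIsoOfFin h _).2

lemma lastE_mem (hm : 0 < m) : lastE M m h hm ∈ M :=
  (M.orderIsoOfFin h _).2

lemma embE_inj : Function.Injective (embE M m h) := by
  intro k k' hkk
  have h1 := (M.orderIsoOfFin h).injective (Subtype.ext hkk)
  have h2 : (k.1 : ℕ) = k'.1 := by simpa using h1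
  exact Fin.ext h2

lemma embE_ne_lastE (hm : 0 < m) (k : Fin (m - 1)) : embE M m h k ≠ lastE M m h hm := by
  intro hk
  have h1 := (M.orderIsoOfFin h).injective (Subtype.ext hk)
  have h2 : (k.1 : ℕ) = m - 1 := by simpa using h1
  exact absurd h2 (Nat.ne_of_lt k.2)

lemma exists_embE (j : I) (hj : j ∈ M) (hm : 0 < m) (hne : j ≠ lastE M m h hm) :
    ∃ k, embE M m h k = j := by
  set a := (M.orderIsoOfFin h).symm ⟨j, hj⟩ with ha
  have haj : (M.orderIsoOfFin h a : I) = j := by rw [ha]; simp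
  have hav : a.1 ≠ m - 1 := by
    intro hav
    have haa : a = ⟨m - 1, Nat.sub_lt hm one_pos⟩ := Fin.ext hav
    apply hne
    rw [← haj, haa]
    rfl
  have hlt : a.1 < m - 1 := by have := a.2; omega
  refine ⟨⟨a.1, hlt⟩, ?_⟩
  have haa : (⟨(⟨a.1, hlt⟩ : Fin (m - 1)).1, lt_of_lt_of_le (⟨a.1, hlt⟩ : Fin (m - 1)).2 (Nat.sub_le m 1)⟩ : Fin m) = a := Fin.ext rfl
  unfold embE
  rw [haa, haj]

variable (ω : Fin (m - 1) → ZMod 2)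

lemma X_notmem (i : I) (hi : i ∉ M) : (brunnian M m h).X i ω = (0 : ZMod 2) := by
  simp only [brunnian]
  rw [dif_neg hi]

lemma X_embE (k : Fin (m - 1)) : (brunnian M m h).X (embE M m h k) ω = ω k := by
  have hi : embE M m h k ∈ M := embE_mem M m h k
  simp only [brunnian]
  rw [dif_pos hi]
  have hsymm : (M.orderIsoOfFin h).symm ⟨embE M m h k, hi⟩
      = ⟨k.1, lt_of_lt_of_le k.2 (Nat.sub_le m 1)⟩ := by
    rw [OrderIso.symm_apply_eq]
    exact Subtype.ext rfl
  rw [hsymm, dif_pos (show (k.1 : ℕ) < m - 1 from k.2)]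

lemma X_lastE (hm : 0 < m) : (brunnian M m h).X (lastE M m h hm) ω = ∑ j, ω j := by
  have hi : lastE M m h hm ∈ M := lastE_mem M m h hm
  simp only [brunnian]
  rw [dif_pos hi]
  have hsymm : (M.orderIsoOfFin h).symm ⟨lastE M m h hm, hi⟩
      = ⟨m - 1, Nat.sub_lt hm one_pos⟩ := by
    rw [OrderIso.symm_apply_eq]
    exact Subtype.ext rfl
  rw [hsymm, dif_neg (lt_irrefl (m - 1))]

end BrunnianFacts

end Stmt17Aux
namespace Stmt17Aux

section BrunnianFacts2

variable {I : Type u} [LinearOrder I] (M : Finset I) (m : ℕ) (h : M.card = m)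

lemma sum_X (hm : 0 < m) (ω : Fin (m - 1) → ZMod 2) :
    ∑ j ∈ M, (brunnian M m h).X j ω = 0 := by
  classical
  set G : ℕ → ZMod 2 := fun t => if ht : t < m - 1 then ω ⟨t, ht⟩ else ∑ j, ω j with hG
  have h1 : ∑ j ∈ M, (brunnian M m h).X j ω = ∑ a : Fin m, G a.1 := by
    rw [← Finset.sum_attach M (fun j => (brunnian M m h).X j ω)]
    rw [← Finset.univ_eq_attach]
    refine (Fintype.sum_equiv (M.orderIsoOfFin h).toEquiv (fun a => G a.1)
      (fun j => (brunnian M m h).X (j : I) ω) ?_).symm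
    intro a
    have hj : (M.orderIsoOfFin h a : I) ∈ M := (M.orderIsoOfFin h a).2
    have hcoe : (((M.orderIsoOfFin h).toEquiv a : {x // x ∈ M}) : I) = (M.orderIsoOfFin h a : I) := rfl
    simp only [brunnian, hG, hcoe]
    rw [dif_pos hj]
    have heq : (M.orderIsoOfFin h).symm ⟨(M.orderIsoOfFin h a : I), hj⟩ = a := by
      rw [OrderIso.symm_apply_eq]
    simp only [heq]
  rw [h1]
  have h2 : ∑ a : Fin m, G a.1 = ∑ t ∈ Finset.range m, G t :=
    Fin.sum_univ_eq_sum_range (fun t => G t) m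
  have h3 : m = (m - 1) + 1 := by omega
  rw [h2, h3, Finset.sum_range_succ]
  have h4 : ∀ t ∈ Finset.range (m - 1), G t = (fun t => if ht : t < m - 1 then ω ⟨t, ht⟩ else 0) t := by
    intro t ht
    rw [Finset.mem_range] at ht
    simp [hG, ht]
  rw [Finset.sum_congr rfl h4]
  have h5 : ∑ t ∈ Finset.range (m - 1), (fun t => if ht : t < m - 1 then ω ⟨t, ht⟩ else 0) t
      = ∑ k : Fin (m - 1), ω k := by
    rw [← Fin.sum_univ_eq_sum_range]
    exact Finset.sum_congr rfl (fun k _ => by simp [k.2])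
  have h6 : G (m - 1) = ∑ j, ω j := by simp [hG]
  rw [h5, h6]
  exact zmod2_add_self _

/-- number of sample points realizing `x` on `J`. -/
noncomputable def Nc (J : Set I) (x : I → ZMod 2) : ℕ :=
  Nat.card {ω : Fin (m - 1) → ZMod 2 | ∀ j ∈ J, (brunnian M m h).X j ω = x j}

lemma probEq_eq (J : Set I) (x : I → ZMod 2) :
    (brunnian M m h).probEq J x = (Nc M m h J x : ℝ) * ((2 : ℝ) ^ (m - 1))⁻¹ := by
  classical
  unfold RandomFamily.probEq RandomFamily.prob Nc
  simp only [Set.indicator_apply]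
  have hP : ∀ ω : (brunnian M m h).Ω, (brunnian M m h).P ω = ((2 : ℝ) ^ (m - 1))⁻¹ :=
    fun ω => rfl
  rw [Finset.sum_congr rfl (fun ω _ => by rw [hP ω])]
  rw [Finset.sum_ite, Finset.sum_const, Finset.sum_const_zero, add_zero, nsmul_eq_mul]
  congr 1
  rw [Nat.card_eq_fintype_card, Fintype.card_subtype]
  norm_num
  rfl

lemma respects_of_Nc (J1 J2 : Set I) (x' : ∀ i, (brunnian M m h).R i)
    (hN : ∀ x : I → ZMod 2, Nc M m h (J1 ∪ J2) x * 2 ^ (m - 1) = Nc M m h J1 x * Nc M m h J2 x) :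
    (brunnian M m h).probEq (J1 ∪ J2) x' = (brunnian M m h).probEq J1 x' * (brunnian M m h).probEq J2 x' := by
  rw [probEq_eq M m h (J1 ∪ J2) x', probEq_eq M m h J1 x', probEq_eq M m h J2 x']
  have h2 : ((2 : ℝ) ^ (m - 1)) ≠ 0 := by positivity
  have hcast : (Nc M m h (J1 ∪ J2) x' : ℝ) * 2 ^ (m - 1)
      = (Nc M m h J1 x' : ℝ) * (Nc M m h J2 x' : ℝ) := by exact_mod_cast hN x'
  field_simp
  linear_combination hcast

end BrunnianFacts2

end Stmt17Aux
namespace Stmt17Aux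

section Flip

variable {n : ℕ}

/-- flip: replace coordinate `k0` by the total sum. -/
def Tk (k0 : Fin n) (ω : Fin n → ZMod 2) : Fin n → ZMod 2 :=
  fun k => if k = k0 then ∑ j, ω j else ω k

lemma Tk_apply_ne (k0 : Fin n) (ω : Fin n → ZMod 2) {k : Fin n} (hk : k ≠ k0) :
    Tk k0 ω k = ω k := if_neg hk

lemma Tk_sum (k0 : Fin n) (ω : Fin n → ZMod 2) : ∑ k, Tk k0 ω k = ω k0 := by
  classical
  have h1 : ∑ k, Tk k0 ω k = (∑ j, ω j) + ∑ k ∈ Finset.univ.erase k0, ω k := by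
    rw [← Finset.add_sum_erase _ _ (Finset.mem_univ k0)]
    congr 1
    · exact if_pos rfl
    · exact Finset.sum_congr rfl fun k hk => if_neg (Finset.ne_of_mem_erase hk)
  have h2 : (∑ j, ω j) = ω k0 + ∑ k ∈ Finset.univ.erase k0, ω k :=
    (Finset.add_sum_erase _ _ (Finset.mem_univ k0)).symm
  rw [h1, h2, add_assoc, zmod2_add_self, add_zero]

lemma Tk_invol (k0 : Fin n) : Function.Involutive (Tk k0) := by
  intro ω
  funext k
  by_cases hk : k = k0
  · subst hk
    have : Tk k ω k = ∑ j, ω j := if_pos rfl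
    calc Tk k (Tk k ω) k = ∑ j, Tk k ω j := if_pos rfl
      _ = ω k := Tk_sum k ω
  · rw [Tk_apply_ne _ _ hk, Tk_apply_ne _ _ hk]

/-- flip as a permutation. -/
def TkE (k0 : Fin n) : Equiv.Perm (Fin n → ZMod 2) :=
  Function.Involutive.toPerm (Tk k0) (Tk_invol k0)

lemma card_comp_equiv {α β : Type*} (e : α ≃ β) (p : β → Prop) :
    Nat.card {a | p (e a)} = Nat.card {b | p b} :=
  Nat.card_congr (e.subtypeEquiv fun _ => Iff.rfl)

end Flip

section Invariance

variable {I : Type u} [LinearOrder I] (M : Finset I) (m : ℕ) (h : M.card = m)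

lemma invariance_simple (J : Set I) (hm0 : 0 < m) (hlast : lastE M m h hm0 ∉ J)
    (y : I → ZMod 2) (ω ω' : Fin (m - 1) → ZMod 2)
    (hagree : ∀ k, embE M m h k ∈ J → ω k = ω' k) :
    (∀ j ∈ J, (brunnian M m h).X j ω = y j) ↔ (∀ j ∈ J, (brunnian M m h).X j ω' = y j) := by
  refine forall₂_congr fun j hj => ?_
  suffices hs : (brunnian M m h).X j ω = (brunnian M m h).X j ω' by rw [hs]
  by_cases hjM : j ∈ M
  · have hjl : j ≠ lastE M m h hm0 := fun hh => hlast (hh ▸ hj)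
    obtain ⟨k, hk⟩ := exists_embE M m h j hjM hm0 hjl
    subst hk
    rw [X_embE, X_embE]
    exact hagree k hj
  · rw [X_notmem M m h ω j hjM, X_notmem M m h ω' j hjM]

lemma invariance_T1 (J : Set I) (hm0 : 0 < m) (hlast : lastE M m h hm0 ∉ J)
    (k0 : Fin (m - 1)) (hk0 : embE M m h k0 ∉ J)
    (y : I → ZMod 2) (ω ω' : Fin (m - 1) → ZMod 2)
    (hagree : ∀ k, embE M m h k ∈ J → ω k = ω' k) :
    (∀ j ∈ J, (brunnian M m h).X j (Tk k0 ω) = y j)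
      ↔ (∀ j ∈ J, (brunnian M m h).X j (Tk k0 ω') = y j) := by
  refine forall₂_congr fun j hj => ?_
  suffices hs : (brunnian M m h).X j (Tk k0 ω) = (brunnian M m h).X j (Tk k0 ω') by rw [hs]
  by_cases hjM : j ∈ M
  · have hjl : j ≠ lastE M m h hm0 := fun hh => hlast (hh ▸ hj)
    obtain ⟨k, hk⟩ := exists_embE M m h j hjM hm0 hjl
    subst hk
    have hkk0 : k ≠ k0 := fun hh => hk0 (hh ▸ hj)
    rw [X_embE, X_embE, Tk_apply_ne _ _ hkk0, Tk_apply_ne _ _ hkk0]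
    exact hagree k hj
  · rw [X_notmem M m h _ j hjM, X_notmem M m h _ j hjM]

lemma invariance_T2 (J : Set I) (hm0 : 0 < m)
    (k0 : Fin (m - 1)) (hk0 : embE M m h k0 ∉ J)
    (y : I → ZMod 2) (ω ω' : Fin (m - 1) → ZMod 2)
    (hagree : ∀ k, (embE M m h k ∈ J ∨ k = k0) → ω k = ω' k) :
    (∀ j ∈ J, (brunnian M m h).X j (Tk k0 ω) = y j)
      ↔ (∀ j ∈ J, (brunnian M m h).X j (Tk k0 ω') = y j) := by
  refine forall₂_congr fun j hj => ?_
  suffices hs : (brunnian M m h).X j (Tk k0 ω) = (brunnian M m h).X j (Tk k0 ω') by rw [hs]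
  by_cases hjM : j ∈ M
  · by_cases hjl : j = lastE M m h hm0
    · subst hjl
      rw [X_lastE M m h _ hm0, X_lastE M m h _ hm0, Tk_sum, Tk_sum]
      exact hagree k0 (Or.inr rfl)
    · obtain ⟨k, hk⟩ := exists_embE M m h j hjM hm0 hjl
      subst hk
      have hkk0 : k ≠ k0 := fun hh => hk0 (hh ▸ hj)
      rw [X_embE, X_embE, Tk_apply_ne _ _ hkk0, Tk_apply_ne _ _ hkk0]
      exact hagree k (Or.inl hj)
  · rw [X_notmem M m h _ j hjM, X_notmem M m h _ j hjM]

end Invariance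

end Stmt17Aux
namespace Stmt17Aux

section RespectLemmas

variable {I : Type u} [LinearOrder I] (M : Finset I) (m : ℕ) (h : M.card = m)

lemma sat_union (J1 J2 : Set I) (y : I → ZMod 2) :
    {ω : Fin (m - 1) → ZMod 2 | ∀ j ∈ J1 ∪ J2, (brunnian M m h).X j ω = y j}
      = {ω : Fin (m - 1) → ZMod 2 | (∀ j ∈ J1, (brunnian M m h).X j ω = y j)
          ∧ (∀ j ∈ J2, (brunnian M m h).X j ω = y j)} := by
  ext ω
  simp only [Set.mem_setOf_eq, Set.mem_union, or_imp, forall_and]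

lemma Nc_mul (hm0 : 0 < m) (J1 J2 : Set I) (hd : Disjoint J1 J2) (j0 : I) (hj0M : j0 ∈ M)
    (hj01 : j0 ∉ J1) (hj02 : j0 ∉ J2) (hl1 : lastE M m h hm0 ∉ J1) (y : I → ZMod 2) :
    Nc M m h (J1 ∪ J2) y * 2 ^ (m - 1) = Nc M m h J1 y * Nc M m h J2 y := by
  classical
  set C : Set (Fin (m - 1)) := {k | embE M m h k ∈ J1} with hC
  by_cases hl2 : lastE M m h hm0 ∈ J2
  · -- conjugate by the flip at `k0`
    have hj0l : j0 ≠ lastE M m h hm0 := fun hh => hj02 (hh ▸ hl2)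
    obtain ⟨k0, hk0⟩ := exists_embE M m h j0 hj0M hm0 hj0l
    have hk01 : embE M m h k0 ∉ J1 := by rw [hk0]; exact hj01
    have hk02 : embE M m h k0 ∉ J2 := by rw [hk0]; exact hj02
    have e0 : ∀ J : Set I, Nc M m h J y
        = Nat.card {ω : Fin (m - 1) → ZMod 2 | ∀ j ∈ J, (brunnian M m h).X j (Tk k0 ω) = y j} := by
      intro J
      unfold Nc
      exact (card_comp_equiv (TkE k0)
        (fun ω => ∀ j ∈ J, (brunnian M m h).X j ω = y j)).symm
    have hsetEq : {ω : Fin (m - 1) → ZMod 2 | ∀ j ∈ J1 ∪ J2, (brunnian M m h).X j (Tk k0 ω) = y j}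
        = {ω : Fin (m - 1) → ZMod 2 | (∀ j ∈ J1, (brunnian M m h).X j (Tk k0 ω) = y j)
            ∧ (∀ j ∈ J2, (brunnian M m h).X j (Tk k0 ω) = y j)} := by
      ext ω
      simp only [Set.mem_setOf_eq, Set.mem_union, or_imp, forall_and]
    rw [e0 (J1 ∪ J2), e0 J1, e0 J2, hsetEq]
    refine key_count _ _ C ?_ ?_
    · intro ω ω' ha
      exact invariance_T1 M m h J1 hm0 hl1 k0 hk01 y ω ω' fun k hk => ha k hk
    · intro ω ω' ha
      refine invariance_T2 M m h J2 hm0 k0 hk02 y ω ω' fun k hk => ha k ?_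
      rcases hk with hk | rfl
      · exact fun hc => Set.disjoint_left.mp hd hc hk
      · exact hk01
  · -- no flip needed
    unfold Nc
    rw [sat_union]
    refine key_count _ _ C ?_ ?_
    · intro ω ω' ha
      exact invariance_simple M m h J1 hm0 hl1 y ω ω' fun k hk => ha k hk
    · intro ω ω' ha
      exact invariance_simple M m h J2 hm0 hl2 y ω ω' fun k hk =>
        ha k fun hc => Set.disjoint_left.mp hd hc hk

lemma respects_main (hm0 : 0 < m) (J1 J2 : Set I) (hd : Disjoint J1 J2) (j0 : I)
    (hj0M : j0 ∈ M) (hj01 : j0 ∉ J1) (hj02 : j0 ∉ J2) :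
    (brunnian M m h).Respects J1 J2 := by
  by_cases hl : lastE M m h hm0 ∈ J1
  · have hl2 : lastE M m h hm0 ∉ J2 := fun hh => Set.disjoint_left.mp hd hl hh
    intro x
    have hs := respects_of_Nc M m h J2 J1 x
      (fun y => Nc_mul M m h hm0 J2 J1 hd.symm j0 hj0M hj02 hj01 hl2 y)
    rw [Set.union_comm J1 J2, hs, mul_comm]
  · exact fun x => respects_of_Nc M m h J1 J2 x
      (fun y => Nc_mul M m h hm0 J1 J2 hd j0 hj0M hj01 hj02 hl y)

lemma respects_constant (J1 J2 : Set I) (hJ2 : ∀ j ∈ J2, j ∉ M) :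
    (brunnian M m h).Respects J1 J2 := by
  intro x
  refine respects_of_Nc M m h J1 J2 x fun y => ?_
  classical
  unfold Nc
  rw [sat_union]
  refine key_count _ _ Set.univ ?_ ?_
  · intro ω ω' ha
    have : ω = ω' := funext fun k => ha k trivial
    rw [this]
  · intro ω ω' _
    refine forall₂_congr fun j hj => ?_
    rw [X_notmem M m h ω j (hJ2 j hj), X_notmem M m h ω' j (hJ2 j hj)]

end RespectLemmas

end Stmt17Aux
namespace Stmt17Aux

section Contest

variable {I : Type u} [LinearOrder I] (M : Finset I) (m : ℕ) (h : M.card = m)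

lemma exists_sat (hm0 : 0 < m) (J : Set I) (hJM : J ⊆ (↑M : Set I)) (hne : J ≠ (↑M : Set I))
    (x : I → ZMod 2) :
    ∃ ω : Fin (m - 1) → ZMod 2, ∀ j ∈ J, (brunnian M m h).X j ω = x j := by
  classical
  obtain ⟨j0, hj0M, hj0J⟩ : ∃ j0 ∈ (↑M : Set I), j0 ∉ J := by
    by_contra hc
    push_neg at hc
    exact hne (Set.Subset.antisymm hJM hc)
  have hj0M' : j0 ∈ M := hj0M
  set ω0 : Fin (m - 1) → ZMod 2 := fun k => if embE M m h k ∈ J then x (embE M m h k) else 0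
    with hω0
  have hsat0 : ∀ j ∈ J, j ≠ lastE M m h hm0 → ∀ c : ZMod 2, ∀ k0 : Fin (m - 1),
      embE M m h k0 ∉ J →
      (brunnian M m h).X j (fun k => if k = k0 then c else ω0 k) = x j := by
    intro j hj hjl c k0 hk0J
    have hjM : j ∈ M := hJM hj
    obtain ⟨k, hk⟩ := exists_embE M m h j hjM hm0 hjl
    subst hk
    rw [X_embE]
    have hkk0 : k ≠ k0 := fun hh => hk0J (hh ▸ hj)
    simp only [if_neg hkk0, hω0, if_pos hj]
    rfl
  by_cases hl : lastE M m h hm0 ∈ J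
  · have hj0l : j0 ≠ lastE M m h hm0 := fun hh => hj0J (hh ▸ hl)
    obtain ⟨k0, hk0⟩ := exists_embE M m h j0 hj0M' hm0 hj0l
    have hk0J : embE M m h k0 ∉ J := by rw [hk0]; exact hj0J
    set t : ZMod 2 := ∑ k, ω0 k with ht
    set c : ZMod 2 := x (lastE M m h hm0) + t with hc
    refine ⟨fun k => if k = k0 then c else ω0 k, ?_⟩
    intro j hj
    by_cases hjl : j = lastE M m h hm0
    · subst hjl
      rw [X_lastE M m h _ hm0]
      have hω0k0 : ω0 k0 = 0 := by simp only [hω0]; rw [if_neg hk0J]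
      have hsum : ∑ k, (if k = k0 then c else ω0 k) = c + ∑ k ∈ Finset.univ.erase k0, ω0 k := by
        rw [← Finset.add_sum_erase _ _ (Finset.mem_univ k0)]
        congr 1
        · exact if_pos rfl
        · exact Finset.sum_congr rfl fun k hk => if_neg (Finset.ne_of_mem_erase hk)
      have herase : ∑ k ∈ Finset.univ.erase k0, ω0 k = t := by
        rw [ht, ← Finset.add_sum_erase _ _ (Finset.mem_univ k0), hω0k0, zero_add]
      rw [hsum, herase, hc, add_assoc, zmod2_add_self, add_zero]
    · exact hsat0 j hj hjl c k0 hk0J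
  · refine ⟨ω0, ?_⟩
    intro j hj
    have hjM : j ∈ M := hJM hj
    have hjl : j ≠ lastE M m h hm0 := fun hh => hl (hh ▸ hj)
    obtain ⟨k, hk⟩ := exists_embE M m h j hjM hm0 hjl
    subst hk
    rw [X_embE]
    simp only [hω0]
    rw [if_pos hj]

lemma probEq_pos (hm0 : 0 < m) (J : Set I) (hJM : J ⊆ (↑M : Set I)) (hne : J ≠ (↑M : Set I))
    (x : I → ZMod 2) : 0 < (brunnian M m h).probEq J x := by
  rw [probEq_eq]
  have hpos : 0 < Nc M m h J x := by
    obtain ⟨ω, hω⟩ := exists_sat M m h hm0 J hJM hne x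
    have : Nonempty {ω : Fin (m - 1) → ZMod 2 | ∀ j ∈ J, (brunnian M m h).X j ω = x j} :=
      ⟨⟨ω, hω⟩⟩
    exact Nat.card_pos
  have h1 : (0 : ℝ) < (Nc M m h J x : ℝ) := by exact_mod_cast hpos
  have h2 : (0 : ℝ) < ((2 : ℝ) ^ (m - 1))⁻¹ := by positivity
  exact mul_pos h1 h2

lemma probEq_M_zero (hm0 : 0 < m) (x : I → ZMod 2) (fE : I) (hfE : fE ∈ M)
    (hx : x = fun i => if i = fE then (1 : ZMod 2) else 0) :
    (brunnian M m h).probEq (↑M : Set I) x = 0 := by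
  classical
  rw [probEq_eq]
  have hN : Nc M m h (↑M : Set I) x = 0 := by
    unfold Nc
    have hempty : {ω : Fin (m - 1) → ZMod 2 | ∀ j ∈ (↑M : Set I), (brunnian M m h).X j ω = x j}
        = ∅ := by
      ext ω
      simp only [Set.mem_setOf_eq, Set.mem_empty_iff_false, iff_false]
      intro hsat
      have h1' : ∑ j ∈ M, (brunnian M m h).X j ω = ∑ j ∈ M, x j :=
        Finset.sum_congr rfl fun j hj => hsat j hj
      rw [sum_X M m h hm0 ω] at h1'
      have h2' : ∑ j ∈ M, x j = 1 := by
        rw [hx]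
        rw [Finset.sum_ite_eq' M fE (fun _ => (1 : ZMod 2))]
        rw [if_pos hfE]
      rw [h2'] at h1'
      exact one_ne_zero h1'.symm
    rw [hempty]
    simp
  rw [hN]
  simp

lemma M_mem_Kconn (hm : 2 ≤ m) : (↑M : Set I) ∈ (brunnian M m h).Kconn := by
  intro J1 J2 hdis hresp
  obtain ⟨h1, h2, hd, hu⟩ := hdis
  have hm0 : 0 < m := by omega
  have hm1 : 0 < m - 1 := by omega
  classical
  set fE : I := embE M m h ⟨0, hm1⟩ with hfE
  set x : I → ZMod 2 := fun i => if i = fE then 1 else 0 with hx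
  have hresp' := hresp x
  rw [hu] at hresp'
  have hzero := probEq_M_zero M m h hm0 x fE (embE_mem M m h _) hx
  have hJ1M : J1 ⊆ (↑M : Set I) := hu ▸ Set.subset_union_left
  have hJ2M : J2 ⊆ (↑M : Set I) := hu ▸ Set.subset_union_right
  obtain ⟨b2, hb2⟩ := h2
  obtain ⟨b1, hb1⟩ := h1
  have hJ1ne : J1 ≠ (↑M : Set I) := by
    intro hh
    exact Set.disjoint_left.mp hd (hh ▸ hJ2M hb2) hb2
  have hJ2ne : J2 ≠ (↑M : Set I) := by
    intro hh
    exact Set.disjoint_left.mp hd hb1 (hh ▸ hJ1M hb1)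
  have hp1 := probEq_pos M m h hm0 J1 hJ1M hJ1ne x
  have hp2 := probEq_pos M m h hm0 J2 hJ2M hJ2ne x
  rw [hzero] at hresp'
  exact absurd hresp'.symm (ne_of_gt (mul_pos hp1 hp2))

end Contest

end Stmt17Aux
namespace Stmt17Aux

section Structure

variable {I : Type u}

lemma empty_mem_Kconn (φ : RandomFamily I) : (∅ : Set I) ∈ φ.Kconn := by
  intro J1 J2 hdis _
  obtain ⟨⟨a, ha⟩, _, _, hu⟩ := hdis
  exact absurd (hu ▸ Set.mem_union_left J2 ha) (Set.notMem_empty a)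

lemma singleton_mem_Kconn (φ : RandomFamily I) (i : I) : ({i} : Set I) ∈ φ.Kconn := by
  intro J1 J2 hdis _
  obtain ⟨⟨a, ha⟩, ⟨b, hb⟩, hd, hu⟩ := hdis
  have ha' : a ∈ ({i} : Set I) := hu ▸ Set.mem_union_left J2 ha
  have hb' : b ∈ ({i} : Set I) := hu ▸ Set.mem_union_right J1 hb
  rw [Set.mem_singleton_iff] at ha' hb'
  have hab : a = b := ha'.trans hb'.symm
  subst hab
  exact Set.disjoint_left.mp hd ha hb

lemma isConn_discrete : IsConnectivity (discreteStructure I) := by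
  refine ⟨Or.inl rfl, fun i => Or.inr ⟨i, rfl⟩, ?_⟩
  intro K L hK hL hKL
  obtain ⟨z, hz⟩ := hKL
  rcases hK with hK | ⟨i, rfl⟩
  · rw [Set.mem_singleton_iff] at hK
    subst hK
    exact absurd hz.1 (Set.notMem_empty z)
  rcases hL with hL | ⟨j, rfl⟩
  · rw [Set.mem_singleton_iff] at hL
    subst hL
    exact absurd hz.2 (Set.notMem_empty z)
  have hzi : z = i := Set.mem_singleton_iff.mp hz.1
  have hzj : z = j := Set.mem_singleton_iff.mp hz.2
  subst hzi hzj
  rw [Set.union_self]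
  exact Or.inr ⟨z, rfl⟩

variable (M : Finset I)

lemma isConn_KM :
    IsConnectivity ({(∅ : Set I)} ∪ {A : Set I | ∃ i : I, A = {i}} ∪ {(M : Set I)}) := by
  refine ⟨Or.inl (Or.inl rfl), fun i => Or.inl (Or.inr ⟨i, rfl⟩), ?_⟩
  intro K L hK hL hKL
  obtain ⟨z, hz⟩ := hKL
  rcases hK with (hK | ⟨i, rfl⟩) | hK
  · rw [Set.mem_singleton_iff] at hK
    subst hK
    exact absurd hz.1 (Set.notMem_empty z)
  · rcases hL with (hL | ⟨j, rfl⟩) | hL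
    · rw [Set.mem_singleton_iff] at hL
      subst hL
      exact absurd hz.2 (Set.notMem_empty z)
    · have hzi : z = i := Set.mem_singleton_iff.mp hz.1
      have hzj : z = j := Set.mem_singleton_iff.mp hz.2
      subst hzi hzj
      rw [Set.union_self]
      exact Or.inl (Or.inr ⟨z, rfl⟩)
    · rw [Set.mem_singleton_iff] at hL
      subst hL
      have hzi : z = i := Set.mem_singleton_iff.mp hz.1
      subst hzi
      rw [Set.union_eq_self_of_subset_left (Set.singleton_subset_iff.mpr hz.2)]
      exact Or.inr rfl
  · rw [Set.mem_singleton_iff] at hK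
    subst hK
    rcases hL with (hL | ⟨j, rfl⟩) | hL
    · rw [Set.mem_singleton_iff] at hL
      subst hL
      exact absurd hz.2 (Set.notMem_empty z)
    · have hzj : z = j := Set.mem_singleton_iff.mp hz.2
      subst hzj
      rw [Set.union_eq_self_of_subset_right (Set.singleton_subset_iff.mpr hz.1)]
      exact Or.inr rfl
    · rw [Set.mem_singleton_iff] at hL
      subst hL
      rw [Set.union_self]
      exact Or.inr rfl

lemma generated_KM :
    generated {(M : Set I)}
      = ({(∅ : Set I)} ∪ {A : Set I | ∃ i : I, A = {i}} ∪ {(M : Set I)}) := by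
  apply Set.Subset.antisymm
  · refine Set.sInter_subset_of_mem ?_
    refine ⟨isConn_KM M, ?_⟩
    intro A hA
    rw [Set.mem_singleton_iff] at hA
    subst hA
    exact Or.inr rfl
  · intro J hJ
    refine Set.mem_sInter.mpr fun 𝒦 h𝒦 => ?_
    obtain ⟨hconn, hMin⟩ := h𝒦
    rcases hJ with (hJ | ⟨i, rfl⟩) | hJ
    · rw [Set.mem_singleton_iff] at hJ
      subst hJ
      exact hconn.1
    · exact hconn.2.1 i
    · rw [Set.mem_singleton_iff] at hJ
      subst hJ
      exact hMin rfl

lemma irred_KM (m : ℕ) (hm : 2 ≤ m) (h : M.card = m) :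
    irred ({(∅ : Set I)} ∪ {A : Set I | ∃ i : I, A = {i}} ∪ {(M : Set I)})
      = {(M : Set I)} := by
  have hMcard : (M : Set I).ncard = m := by rw [Set.ncard_coe_finset, h]
  ext K
  constructor
  · rintro ⟨hK, _, hKcard⟩
    rcases hK with (hK | ⟨i, rfl⟩) | hK
    · rw [Set.mem_singleton_iff] at hK
      subst hK
      simp [Set.ncard_empty] at hKcard
    · rw [Set.ncard_singleton] at hKcard
      omega
    · exact hK
  · intro hK
    rw [Set.mem_singleton_iff] at hK
    subst hK
    refine ⟨Or.inr rfl, ?_, by rw [hMcard]; exact hm⟩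
    intro hMg
    have hsub : (({(∅ : Set I)} ∪ {A : Set I | ∃ i : I, A = {i}} ∪ {(M : Set I)})
        \ {(M : Set I)}) ⊆ discreteStructure I := by
      rintro A ⟨hA, hAne⟩
      rcases hA with (hA | hA) | hA
      · exact Or.inl hA
      · exact Or.inr hA
      · exact absurd hA hAne
    have hD : generated (({(∅ : Set I)} ∪ {A : Set I | ∃ i : I, A = {i}} ∪ {(M : Set I)})
        \ {(M : Set I)}) ⊆ discreteStructure I :=
      Set.sInter_subset_of_mem ⟨isConn_discrete, hsub⟩
    have hMne : (M : Set I).Nonempty := by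
      rw [Finset.coe_nonempty, ← Finset.card_pos, h]
      omega
    rcases hD hMg with hh | ⟨i, hi⟩
    · rw [Set.mem_singleton_iff] at hh
      exact Set.nonempty_iff_ne_empty.mp hMne hh
    · rw [hi, Set.ncard_singleton] at hMcard
      omega

end Structure

end Stmt17Aux
namespace Stmt17Aux

section Final

variable {I : Type u} [LinearOrder I] (M : Finset I) (m : ℕ) (h : M.card = m)

lemma Kconn_subset (hm : 2 ≤ m) :
    (brunnian M m h).Kconn
      ⊆ ({(∅ : Set I)} ∪ {A : Set I | ∃ i : I, A = {i}} ∪ {(M : Set I)}) := by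
  intro J hJ
  by_contra hJ'
  simp only [Set.mem_union, Set.mem_singleton_iff, Set.mem_setOf_eq, not_or] at hJ'
  obtain ⟨⟨hJne, hJsing⟩, hJM⟩ := hJ'
  have hm0 : 0 < m := by omega
  obtain ⟨a, ha⟩ := Set.nonempty_iff_ne_empty.mpr hJne
  obtain ⟨b, hb, hba⟩ : ∃ b ∈ J, b ≠ a := by
    by_contra hc
    push_neg at hc
    exact hJsing ⟨a, Set.eq_singleton_iff_unique_mem.mpr ⟨ha, hc⟩⟩
  by_cases hMJ : (M : Set I) ⊆ J
  · have hMne : (M : Set I).Nonempty := by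
      rw [Finset.coe_nonempty, ← Finset.card_pos, h]
      omega
    have hdiffne : (J \ (M : Set I)).Nonempty := by
      by_contra hc
      rw [Set.not_nonempty_iff_eq_empty, Set.diff_eq_empty] at hc
      exact hJM (Set.Subset.antisymm hc hMJ)
    have hdis : IsDissociation J (M : Set I) (J \ (M : Set I)) :=
      ⟨hMne, hdiffne, Set.disjoint_sdiff_right, Set.union_diff_cancel hMJ⟩
    exact hJ (M : Set I) (J \ (M : Set I)) hdis
      (respects_constant M m h _ _ fun j hj hjM => hj.2 (Finset.mem_coe.mpr hjM))
  · obtain ⟨j0, hj0M, hj0J⟩ : ∃ j0 ∈ M, j0 ∉ J := by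
      by_contra hc
      push_neg at hc
      exact hMJ fun z hz => hc z (Finset.mem_coe.mp hz)
    have hdisj : Disjoint ({a} : Set I) (J \ {a}) := by
      rw [Set.disjoint_left]
      rintro z hz hz2
      rw [Set.mem_singleton_iff] at hz
      exact hz2.2 (hz ▸ Set.mem_singleton z)
    have hdis : IsDissociation J ({a} : Set I) (J \ {a}) :=
      ⟨⟨a, rfl⟩, ⟨b, hb, fun hh => hba (Set.mem_singleton_iff.mp hh)⟩, hdisj,
        Set.union_diff_cancel (Set.singleton_subset_iff.mpr ha)⟩
    refine hJ ({a} : Set I) (J \ {a}) hdis ?_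
    refine respects_main M m h hm0 _ _ hdisj j0 hj0M ?_ ?_
    · intro hh
      rw [Set.mem_singleton_iff] at hh
      exact hj0J (hh ▸ ha)
    · exact fun hh => hj0J hh.1

lemma Kconn_eq (hm : 2 ≤ m) :
    (brunnian M m h).Kconn
      = ({(∅ : Set I)} ∪ {A : Set I | ∃ i : I, A = {i}} ∪ {(M : Set I)}) := by
  apply Set.Subset.antisymm (Kconn_subset M m h hm)
  intro J hJ
  rcases hJ with (hJ | ⟨i, rfl⟩) | hJ
  · rw [Set.mem_singleton_iff] at hJ
    subst hJ
    exact empty_mem_Kconn _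
  · exact singleton_mem_Kconn _ i
  · rw [Set.mem_singleton_iff] at hJ
    subst hJ
    exact M_mem_Kconn M m h hm

end Final

end Stmt17Aux

/-- the connectivity structure of the canonical `M`-brunnian family
consists exactly of `∅`, the singletons, and `M`; i.e. `K_{β_M} = [{M}]`, and `M` is
its unique irreducible connected set of cardinality ≥ 2. -/
theorem stmt17 {I : Type u} [Fintype I] [Nonempty I] [LinearOrder I]
    (M : Finset I) (m : ℕ) (hm : 2 ≤ m) (h : M.card = m) :
    (brunnian M m h).Kconn
        = ({(∅ : Set I)} ∪ {A : Set I | ∃ i : I, A = {i}} ∪ {(M : Set I)}) ∧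
    (brunnian M m h).Kconn = generated {(M : Set I)} ∧
    irred (brunnian M m h).Kconn = {(M : Set I)} := by
  have hK := Stmt17Aux.Kconn_eq M m h hm
  refine ⟨hK, ?_, ?_⟩
  · rw [hK, Stmt17Aux.generated_KM M]
  · rw [hK]
    exact Stmt17Aux.irred_KM M m hm h
end

section
/- For every integral connectivity structure 𝒦 on a finite nonempty set I, there exists a random family φ on I (a finite probability space together with finitely valued random variables indexed by I) whose connectivity structure equals 𝒦: K_φ = 𝒦. Explicitly, if 𝒦 is discrete one may take the family of constant variables on a one-point space, and otherwise the tensor product ⨂_{K ∈ 𝒦̃} β_K of the canonical K-brunnian families over the irreducible connected sets K of 𝒦 of cardinality ≥ 2 works. -/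
universe u

variable {I : Type u}

section Aux
open Classical

lemma zmod2_add_self (a : ZMod 2) : a + a = 0 := by revert a; decide

lemma zmod2_one_one : (1 : ZMod 2) + 1 = 0 := by decide

lemma zmod2_eq_of_add {a b : ZMod 2} (h : a + b = 0) : b = a := by revert a b; decide

lemma card_shift {T : Type u} [Fintype T] (t0 : T) (s : ZMod 2) :
    Nat.card {h : T → ZMod 2 // ∑ t, h t = s}
      = Nat.card {h : T → ZMod 2 // ∑ t, h t = s + 1} := by
  refine Nat.card_congr ⟨fun h => ⟨fun t => h.1 t + (if t = t0 then 1 else 0), ?_⟩,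
    fun h => ⟨fun t => h.1 t + (if t = t0 then 1 else 0), ?_⟩, ?_, ?_⟩
  · rw [Finset.sum_add_distrib, h.2, Finset.sum_ite_eq' Finset.univ t0 (fun _ => (1 : ZMod 2))]
    simp
  · rw [Finset.sum_add_distrib, h.2, Finset.sum_ite_eq' Finset.univ t0 (fun _ => (1 : ZMod 2))]
    simp [add_assoc, zmod2_one_one]
  · intro h
    ext t
    by_cases ht : t = t0 <;> simp [ht, add_assoc, zmod2_one_one]
  · intro h
    ext t
    by_cases ht : t = t0 <;> simp [ht, add_assoc, zmod2_one_one]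

lemma card_sumEq {T : Type u} [Fintype T] (s : ZMod 2) (hT : Nonempty T) :
    Nat.card {h : T → ZMod 2 // ∑ t, h t = s} = 2 ^ (Fintype.card T - 1) := by
  obtain ⟨t0⟩ := hT
  have hz : ∀ z : ZMod 2, z = 1 ↔ ¬ z = 0 := by decide
  have hcompl : Nat.card {h : T → ZMod 2 // ¬ ∑ t, h t = 0}
      = Nat.card {h : T → ZMod 2 // ∑ t, h t = 1} :=
    Nat.card_congr (Equiv.subtypeEquivRight fun h => (hz _).symm)
  have h01 : Nat.card {h : T → ZMod 2 // ∑ t, h t = 0}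
      = Nat.card {h : T → ZMod 2 // ∑ t, h t = 1} := by
    have := card_shift t0 (0 : ZMod 2)
    simpa using this
  have htot : Nat.card {h : T → ZMod 2 // ∑ t, h t = 0}
      + Nat.card {h : T → ZMod 2 // ∑ t, h t = 1} = 2 ^ Fintype.card T := by
    have e0 : Nat.card {h : T → ZMod 2 // ∑ t, h t = 0}
        = Fintype.card {h : T → ZMod 2 // ∑ t, h t = 0} := Nat.card_eq_fintype_card
    have e1 : Nat.card {h : T → ZMod 2 // ¬ ∑ t, h t = 0}
        = Fintype.card {h : T → ZMod 2 // ¬ ∑ t, h t = 0} := Nat.card_eq_fintype_card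
    have e3 := Fintype.card_subtype_compl (fun h : T → ZMod 2 => ∑ t, h t = 0)
    have hle : Fintype.card {h : T → ZMod 2 // ∑ t, h t = 0}
        ≤ Fintype.card (T → ZMod 2) := Fintype.card_subtype_le _
    have hcf : Fintype.card (T → ZMod 2) = 2 ^ Fintype.card T := by
      rw [Fintype.card_fun]; norm_num
    linarith [Nat.sub_add_cancel hle]
  have hpos : 1 ≤ Fintype.card T := Fintype.card_pos_iff.2 ⟨t0⟩
  have hpow : 2 ^ Fintype.card T = 2 ^ (Fintype.card T - 1) * 2 := by
    rw [← pow_succ]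
    congr 1
    exact (Nat.succ_pred_eq_of_pos hpos).symm
  have hs01 : s = 0 ∨ s = 1 := by revert s; decide
  rcases hs01 with rfl | rfl <;> linarith

section Count

variable [Fintype I]

noncomputable local instance (priority := 2000) (S : Set I) : Fintype ↥S :=
  Fintype.ofFinite _

lemma ind_mem (S : Set I) (f : I → ZMod 2) {i : I} (h : i ∈ S) : S.indicator f i = f i :=
  Set.indicator_of_mem h f

lemma ind_nmem (S : Set I) (f : I → ZMod 2) {i : I} (h : i ∉ S) : S.indicator f i = 0 :=
  Set.indicator_of_notMem h f

/-- Predicate for the per-`K` brunnian count. -/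
def Npred (K J : Set I) (y f : I → ZMod 2) : Prop :=
  (∀ i, i ∉ K → f i = 0) ∧ (∑ i, f i = 0) ∧ (∀ j ∈ J, f j = y j)

noncomputable def Ncnt (K J : Set I) (y : I → ZMod 2) : ℕ :=
  Nat.card {f : I → ZMod 2 // Npred K J y f}

lemma sum_indicator_subtype (S : Set I) (f : I → ZMod 2) :
    ∑ i, S.indicator f i = ∑ t : ↥S, f t := by
  classical
  rw [Finset.sum_congr rfl (fun i (_ : i ∈ Finset.univ) => Set.indicator_apply S f i)]
  rw [← Finset.sum_filter]
  rw [show Finset.univ.filter (· ∈ S) = S.toFinset from by ext i; simp]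
  exact Finset.sum_subtype _ (fun x => Set.mem_toFinset) f

lemma sum_split (K J : Set I) (f : I → ZMod 2) (hsupp : ∀ i, i ∉ K → f i = 0) :
    ∑ i, f i = (∑ i, (K ∩ J).indicator f i) + (∑ i, (K \ J).indicator f i) := by
  rw [← Finset.sum_add_distrib]
  apply Finset.sum_congr rfl
  intro i _
  by_cases hiK : i ∈ K
  · by_cases hiJ : i ∈ J
    · rw [ind_mem (K ∩ J) f ⟨hiK, hiJ⟩, ind_nmem (K \ J) f (fun h => h.2 hiJ), add_zero]
    · rw [ind_nmem (K ∩ J) f (fun h => hiJ h.2), ind_mem (K \ J) f ⟨hiK, hiJ⟩, zero_add]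
  · rw [ind_nmem (K ∩ J) f (fun h => hiK h.1),
      ind_nmem (K \ J) f (fun h => hiK h.1), add_zero, hsupp i hiK]

lemma Ncnt_eq_aux (K J : Set I) (y : I → ZMod 2) (hy : ∀ j ∈ J, j ∉ K → y j = 0) :
    Ncnt K J y = Nat.card {h : ↥(K \ J) → ZMod 2 //
      ∑ t, h t = ∑ i, (K ∩ J).indicator y i} := by
  classical
  apply Nat.card_congr
  refine ⟨fun f => ⟨fun t => f.1 t.1, ?_⟩, fun h => ⟨fun i =>
    if hi : i ∈ K \ J then h.1 ⟨i, hi⟩ else (K ∩ J).indicator y i, ?_, ?_, ?_⟩, ?_, ?_⟩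
  · -- forward sum condition
    obtain ⟨hsupp, hsum, hJ⟩ := f.2
    have e1 : ∑ i, (K ∩ J).indicator f.1 i = ∑ i, (K ∩ J).indicator y i :=
      Finset.sum_congr rfl (fun i _ => by
        by_cases hi : i ∈ K ∩ J
        · rw [ind_mem _ _ hi, ind_mem _ _ hi, hJ i hi.2]
        · rw [ind_nmem _ _ hi, ind_nmem _ _ hi])
    have key : (∑ i, (K ∩ J).indicator y i) + (∑ t : ↥(K \ J), f.1 t.1) = 0 := by
      rw [← e1, ← sum_indicator_subtype (K \ J) f.1, ← sum_split K J f.1 hsupp]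
      exact hsum
    exact zmod2_eq_of_add key
  · -- inverse support condition
    intro i hi
    dsimp only
    rw [dif_neg (fun h => hi h.1), ind_nmem _ _ (fun h => hi h.1)]
  · -- inverse sum condition
    set g : I → ZMod 2 := fun i =>
      if hi : i ∈ K \ J then h.1 ⟨i, hi⟩ else (K ∩ J).indicator y i with hg
    have hsupp : ∀ i, i ∉ K → g i = 0 := by
      intro i hi
      rw [hg]
      dsimp only
      rw [dif_neg (fun h => hi h.1), ind_nmem _ _ (fun h => hi h.1)]
    rw [sum_split K J g hsupp]
    have e1 : ∑ i, (K ∩ J).indicator g i = ∑ i, (K ∩ J).indicator y i :=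
      Finset.sum_congr rfl (fun i _ => by
        by_cases hi : i ∈ K ∩ J
        · rw [ind_mem _ _ hi, ind_mem _ _ hi, hg]
          dsimp only
          rw [dif_neg (fun h => h.2 hi.2), ind_mem _ _ hi]
        · rw [ind_nmem _ _ hi, ind_nmem _ _ hi])
    have e2 : ∑ i, (K \ J).indicator g i = ∑ i, (K ∩ J).indicator y i := by
      rw [sum_indicator_subtype (K \ J) g]
      rw [Finset.sum_congr rfl (fun (t : ↥(K \ J)) (_ : t ∈ Finset.univ) =>
        show g t.1 = h.1 t from by rw [hg]; dsimp only; rw [dif_pos t.2])]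
      exact h.2
    rw [e1, e2, zmod2_add_self]
  · -- inverse J condition
    intro j hj
    dsimp only
    by_cases hjK : j ∈ K
    · rw [dif_neg (fun h => h.2 hj), ind_mem (K ∩ J) y ⟨hjK, hj⟩]
    · rw [dif_neg (fun h => hjK h.1), ind_nmem _ _ (fun h => hjK h.1),
        hy j hj hjK]
  · -- left inverse
    intro f
    ext i
    dsimp only
    by_cases hi : i ∈ K \ J
    · rw [dif_pos hi]
    · rw [dif_neg hi]
      by_cases hiK : i ∈ K
      · have hiJ : i ∈ J := by
          by_contra hiJ
          exact hi ⟨hiK, hiJ⟩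
        rw [ind_mem (K ∩ J) y ⟨hiK, hiJ⟩, (f.2.2.2 i hiJ)]
      · rw [ind_nmem _ _ (fun h => hiK h.1), f.2.1 i hiK]
  · -- right inverse
    intro h
    ext t
    dsimp only
    rw [dif_pos t.2]

lemma Ncnt_pow (K J : Set I) (y : I → ZMod 2) (hKJ : (K \ J).Nonempty)
    (hy : ∀ j ∈ J, j ∉ K → y j = 0) :
    Ncnt K J y = 2 ^ ((K \ J).ncard - 1) := by
  rw [Ncnt_eq_aux K J y hy, card_sumEq _ hKJ.to_subtype]
  congr 2
  rw [← Nat.card_coe_set_eq, Nat.card_eq_fintype_card]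

lemma Ncnt_zero (K J : Set I) (y : I → ZMod 2) (j : I) (hj : j ∈ J) (hjK : j ∉ K)
    (hyj : y j ≠ 0) : Ncnt K J y = 0 := by
  have : IsEmpty {f : I → ZMod 2 // Npred K J y f} :=
    ⟨fun f => hyj (by rw [← f.2.2.2 j hj]; exact f.2.1 j hjK)⟩
  rw [Ncnt, Nat.card_eq_zero]
  exact Or.inl this

lemma Ncnt_pos (K J : Set I) : 0 < Ncnt K J (fun _ => 0) := by
  have hmem : Npred K J (fun _ => 0) (fun _ => 0) :=
    ⟨fun _ _ => rfl, by simp, fun _ _ => rfl⟩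
  have : Nonempty {f : I → ZMod 2 // Npred K J (fun _ => 0) f} := ⟨⟨_, hmem⟩⟩
  exact Nat.card_pos

lemma Ncnt_congr (K J J' : Set I) (y : I → ZMod 2)
    (h : ∀ f, Npred K J y f ↔ Npred K J' y f) : Ncnt K J y = Ncnt K J' y :=
  Nat.card_congr (Equiv.subtypeEquivRight h)

lemma Ncnt_mul (K J1 J2 : Set I) (y : I → ZMod 2) (hK : K.Nonempty)
    (hd : Disjoint J1 J2) (hnc : ¬ Contests K J1 J2) :
    Ncnt K ∅ (fun _ => 0) * Ncnt K (J1 ∪ J2) y = Ncnt K J1 y * Ncnt K J2 y := by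
  have hcK : Ncnt K ∅ (fun _ => 0) = 2 ^ (K.ncard - 1) := by
    rw [Ncnt_pow K ∅ (fun _ => 0) (by rwa [Set.diff_empty])
      (fun j hj _ => absurd hj (Set.notMem_empty j)), Set.diff_empty]
  by_cases hz1 : ∃ j, j ∈ J1 ∧ j ∉ K ∧ y j ≠ 0
  · obtain ⟨j, hj, hjK, hyj⟩ := hz1
    rw [Ncnt_zero K (J1 ∪ J2) y j (Or.inl hj) hjK hyj, Ncnt_zero K J1 y j hj hjK hyj,
      mul_zero, zero_mul]
  by_cases hz2 : ∃ j, j ∈ J2 ∧ j ∉ K ∧ y j ≠ 0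
  · obtain ⟨j, hj, hjK, hyj⟩ := hz2
    rw [Ncnt_zero K (J1 ∪ J2) y j (Or.inr hj) hjK hyj, Ncnt_zero K J2 y j hj hjK hyj,
      mul_zero, mul_zero]
  push_neg at hz1 hz2
  have hy1 : ∀ j ∈ J1, j ∉ K → y j = 0 := fun j hj hjK => hz1 j hj hjK
  have hy2 : ∀ j ∈ J2, j ∉ K → y j = 0 := fun j hj hjK => hz2 j hj hjK
  have hy12 : ∀ j ∈ J1 ∪ J2, j ∉ K → y j = 0 := by
    rintro j (hj | hj) hjK
    · exact hy1 j hj hjK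
    · exact hy2 j hj hjK
  by_cases ha : K ∩ J1 = ∅
  · -- K misses J1
    have hnK : ∀ j ∈ J1, j ∉ K := fun j hj hjK =>
      Set.eq_empty_iff_forall_notMem.1 ha j ⟨hjK, hj⟩
    have hKd : K \ J1 = K := by
      ext i
      simp only [Set.mem_diff, and_iff_left_iff_imp]
      intro hiK hiJ1
      exact hnK i hiJ1 hiK
    have hN1 : Ncnt K J1 y = 2 ^ (K.ncard - 1) := by
      rw [Ncnt_pow K J1 y (by rwa [hKd]) hy1, hKd]
    have hN12 : Ncnt K (J1 ∪ J2) y = Ncnt K J2 y := by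
      apply Ncnt_congr
      intro f
      constructor
      · rintro ⟨h1, h2, h3⟩
        exact ⟨h1, h2, fun j hj => h3 j (Or.inr hj)⟩
      · rintro ⟨h1, h2, h3⟩
        refine ⟨h1, h2, ?_⟩
        rintro j (hj | hj)
        · rw [h1 j (hnK j hj), hy1 j hj (hnK j hj)]
        · exact h3 j hj
    rw [hN1, hN12, hcK]
  by_cases hb : K ∩ J2 = ∅
  · -- K misses J2
    have hnK : ∀ j ∈ J2, j ∉ K := fun j hj hjK =>
      Set.eq_empty_iff_forall_notMem.1 hb j ⟨hjK, hj⟩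
    have hKd : K \ J2 = K := by
      ext i
      simp only [Set.mem_diff, and_iff_left_iff_imp]
      intro hiK hiJ2
      exact hnK i hiJ2 hiK
    have hN2 : Ncnt K J2 y = 2 ^ (K.ncard - 1) := by
      rw [Ncnt_pow K J2 y (by rwa [hKd]) hy2, hKd]
    have hN12 : Ncnt K (J1 ∪ J2) y = Ncnt K J1 y := by
      apply Ncnt_congr
      intro f
      constructor
      · rintro ⟨h1, h2, h3⟩
        exact ⟨h1, h2, fun j hj => h3 j (Or.inl hj)⟩
      · rintro ⟨h1, h2, h3⟩
        refine ⟨h1, h2, ?_⟩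
        rintro j (hj | hj)
        · exact h3 j hj
        · rw [h1 j (hnK j hj), hy2 j hj (hnK j hj)]
    rw [hN2, hN12, hcK, mul_comm]
  -- K not contained in J1 ∪ J2
  have hc : ¬ K ⊆ J1 ∪ J2 := by
    intro hsub
    exact hnc ⟨hsub, Set.nonempty_iff_ne_empty.2 ha, Set.nonempty_iff_ne_empty.2 hb⟩
  obtain ⟨k0, hk0K, hk0⟩ := Set.not_subset.1 hc
  have h12 : (K \ (J1 ∪ J2)).Nonempty := ⟨k0, hk0K, hk0⟩
  have h1 : (K \ J1).Nonempty := h12.mono (Set.diff_subset_diff_right Set.subset_union_left)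
  have h2 : (K \ J2).Nonempty := h12.mono (Set.diff_subset_diff_right Set.subset_union_right)
  rw [hcK, Ncnt_pow K (J1 ∪ J2) y h12 hy12, Ncnt_pow K J1 y h1 hy1, Ncnt_pow K J2 y h2 hy2,
    ← pow_add, ← pow_add]
  congr 1
  have e1 : (K ∩ J1).ncard + (K \ J1).ncard = K.ncard :=
    Set.ncard_inter_add_ncard_diff_eq_ncard K J1 (Set.toFinite K)
  have e2 : (K ∩ J2).ncard + (K \ J2).ncard = K.ncard :=
    Set.ncard_inter_add_ncard_diff_eq_ncard K J2 (Set.toFinite K)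
  have e12 : (K ∩ (J1 ∪ J2)).ncard + (K \ (J1 ∪ J2)).ncard = K.ncard :=
    Set.ncard_inter_add_ncard_diff_eq_ncard K (J1 ∪ J2) (Set.toFinite K)
  have eu : (K ∩ (J1 ∪ J2)).ncard = (K ∩ J1).ncard + (K ∩ J2).ncard := by
    rw [Set.inter_union_distrib_left]
    exact Set.ncard_union_eq
      (hd.mono Set.inter_subset_right Set.inter_subset_right)
      (Set.toFinite _) (Set.toFinite _)
  have p0 : 0 < K.ncard := (Set.ncard_pos (Set.toFinite K)).2 hK
  have p12 : 0 < (K \ (J1 ∪ J2)).ncard := (Set.ncard_pos (Set.toFinite _)).2 h12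
  have p1 : 0 < (K \ J1).ncard := (Set.ncard_pos (Set.toFinite _)).2 h1
  have p2 : 0 < (K \ J2).ncard := (Set.ncard_pos (Set.toFinite _)).2 h2
  omega

lemma Ncnt_contests (K J1 J2 : Set I) (hd : Disjoint J1 J2) (hc : Contests K J1 J2) :
    ∃ y : I → ZMod 2, Ncnt K (J1 ∪ J2) y = 0 ∧ 0 < Ncnt K J1 y ∧ 0 < Ncnt K J2 y := by
  classical
  obtain ⟨hsub, ⟨i0, hi0K, hi0J1⟩, ⟨k0, hk0K, hk0J2⟩⟩ := hc
  have hne : i0 ≠ k0 := fun h => Set.disjoint_left.1 hd hi0J1 (h ▸ hk0J2)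
  refine ⟨fun i => if i = i0 then 1 else 0, ?_, ?_, ?_⟩
  · -- no f matches on J1 ∪ J2
    rw [Ncnt, Nat.card_eq_zero]
    left
    constructor
    intro f
    obtain ⟨hsupp, hsum, hJ⟩ := f.2
    have hfeq : ∀ i, f.1 i = if i = i0 then 1 else 0 := by
      intro i
      by_cases hi : i ∈ J1 ∪ J2
      · exact hJ i hi
      · have hni : i ≠ i0 := fun h => hi (by rw [h]; exact Or.inl hi0J1)
        rw [hsupp i (fun hiK => hi (hsub hiK)), if_neg hni]
    rw [Finset.sum_congr rfl (fun i _ => hfeq i)] at hsum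
    rw [Finset.sum_ite_eq' Finset.univ i0 (fun _ => (1 : ZMod 2))] at hsum
    simp at hsum
  · -- J1 has a positive count
    have hmem : Npred K J1 (fun i => if i = i0 then 1 else 0)
        (fun i => if i = i0 then 1 else if i = k0 then 1 else 0) := by
      refine ⟨?_, ?_, ?_⟩
      · intro i hi
        dsimp only
        have hni : i ≠ i0 := fun h => hi (by rw [h]; exact hi0K)
        have hnk : i ≠ k0 := fun h => hi (by rw [h]; exact hk0K)
        rw [if_neg hni, if_neg hnk]
      · have hsplit : ∀ i : I, (if i = i0 then (1 : ZMod 2) else if i = k0 then 1 else 0)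
            = (if i = i0 then 1 else 0) + (if i = k0 then 1 else 0) := by
          intro i
          by_cases h1 : i = i0
          · subst h1
            rw [if_pos rfl, if_pos rfl, if_neg hne, add_zero]
          · rw [if_neg h1, if_neg h1, zero_add]
        rw [Finset.sum_congr rfl (fun i _ => hsplit i), Finset.sum_add_distrib,
          Finset.sum_ite_eq' Finset.univ i0 (fun _ => (1 : ZMod 2)),
          Finset.sum_ite_eq' Finset.univ k0 (fun _ => (1 : ZMod 2))]
        simp [zmod2_one_one]
      · intro j hj
        dsimp only
        have hnk : j ≠ k0 := fun h => Set.disjoint_left.1 hd hj (by rw [h]; exact hk0J2)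
        by_cases h1 : j = i0
        · rw [if_pos h1, if_pos h1]
        · rw [if_neg h1, if_neg h1, if_neg hnk]
    have : Nonempty {f : I → ZMod 2 // Npred K J1 (fun i => if i = i0 then 1 else 0) f} :=
      ⟨⟨_, hmem⟩⟩
    exact Nat.card_pos
  · -- J2 has a positive count
    have hmem : Npred K J2 (fun i => if i = i0 then 1 else 0) (fun _ => 0) := by
      refine ⟨fun _ _ => rfl, by simp, ?_⟩
      intro j hj
      dsimp only
      have hni : j ≠ i0 := fun h => Set.disjoint_right.1 hd hj (by rw [h]; exact hi0J1)
      rw [if_neg hni]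
    have : Nonempty {f : I → ZMod 2 // Npred K J2 (fun i => if i = i0 then 1 else 0) f} :=
      ⟨⟨_, hmem⟩⟩
    exact Nat.card_pos


end Count

end Aux

section Fam

variable [Fintype I]

/-- The sample space: one brunnian layer for each `a : Fin m`. -/
def famPred (n m : ℕ) (eI : I ≃ Fin n) (KK : Fin m → Set I)
    (g : Fin m → Fin n → ZMod 2) : Prop :=
  ∀ a, Npred (KK a) ∅ (fun _ => 0) (fun i => g a (eI i))

noncomputable def fam (n m : ℕ) (eI : I ≃ Fin n) (KK : Fin m → Set I) :
    RandomFamily I where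
  Ω := {g : Fin m → Fin n → ZMod 2 // famPred n m eI KK g}
  fintΩ := Fintype.ofFinite _
  P := fun _ => ((Nat.card {g : Fin m → Fin n → ZMod 2 // famPred n m eI KK g} : ℝ))⁻¹
  P_nonneg := fun _ => by positivity
  P_total := by
    have hne : Nonempty {g : Fin m → Fin n → ZMod 2 // famPred n m eI KK g} :=
      ⟨⟨fun _ _ => 0, fun a => ⟨fun _ _ => rfl, by simp, fun j hj => absurd hj (Set.notMem_empty j)⟩⟩⟩
    have hpos : 0 < Nat.card {g : Fin m → Fin n → ZMod 2 // famPred n m eI KK g} := by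
      haveI := hne
      exact Nat.card_pos
    rw [Finset.sum_const, nsmul_eq_mul]
    have hcard : (@Finset.univ _ (Fintype.ofFinite
          {g : Fin m → Fin n → ZMod 2 // famPred n m eI KK g})).card
        = Nat.card {g : Fin m → Fin n → ZMod 2 // famPred n m eI KK g} :=
      (@Nat.card_eq_fintype_card _ (Fintype.ofFinite _)).symm
    rw [hcard]
    apply mul_inv_cancel₀
    exact Nat.cast_ne_zero.2 (Nat.pos_iff_ne_zero.1 hpos)
  R := fun _ => Fin m → ZMod 2
  fintR := fun _ => inferInstance
  X := fun i g a => g.1 a (eI i)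

lemma prob_eq_card (φ : RandomFamily I) (c : ℝ) (hP : ∀ ω, φ.P ω = c) (E : Set φ.Ω) :
    φ.prob E = (Nat.card E : ℝ) * c := by
  classical
  rw [RandomFamily.prob]
  calc ∑ ω, E.indicator φ.P ω = ∑ ω, (if ω ∈ E then c else 0) :=
        Finset.sum_congr rfl (fun ω _ => by
          by_cases h : ω ∈ E
          · rw [Set.indicator_of_mem h, if_pos h, hP]
          · rw [Set.indicator_of_notMem h, if_neg h])
    _ = ∑ ω ∈ Finset.univ.filter (· ∈ E), c := (Finset.sum_filter _ _).symm
    _ = (Finset.univ.filter (· ∈ E)).card • c := Finset.sum_const c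
    _ = (Nat.card E : ℝ) * c := by
        rw [nsmul_eq_mul, Nat.card_eq_fintype_card, Fintype.card_subtype]

lemma card_pi_subtype (n' m' : ℕ) (Q : Fin m' → (Fin n' → ZMod 2) → Prop) :
    Nat.card {g : Fin m' → Fin n' → ZMod 2 // ∀ a, Q a (g a)}
      = ∏ a, Nat.card {h : Fin n' → ZMod 2 // Q a h} := by
  rw [← Nat.card_pi]
  exact Nat.card_congr (Equiv.subtypePiEquivPi)

lemma card_reindex (n' : ℕ) (eI : I ≃ Fin n') (K J : Set I) (y : I → ZMod 2) :
    Nat.card {h : Fin n' → ZMod 2 // Npred K J y (fun i => h (eI i))} = Ncnt K J y := by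
  apply Nat.card_congr
  exact Equiv.subtypeEquiv (Equiv.arrowCongr eI.symm (Equiv.refl (ZMod 2)))
    (fun h => Iff.rfl)

lemma fam_card (n m : ℕ) (eI : I ≃ Fin n) (KK : Fin m → Set I) :
    Nat.card {g : Fin m → Fin n → ZMod 2 // famPred n m eI KK g}
      = ∏ a, Ncnt (KK a) ∅ (fun _ => 0) := by
  have h1 := card_pi_subtype n m (fun a h => Npred (KK a) ∅ (fun _ => 0) (fun i => h (eI i)))
  exact h1.trans (Finset.prod_congr rfl (fun a _ => card_reindex n eI (KK a) ∅ (fun _ => 0)))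

lemma fam_event_card (n m : ℕ) (eI : I ≃ Fin n) (KK : Fin m → Set I)
    (J : Set I) (x : I → Fin m → ZMod 2) :
    Nat.card ↥{ω : (fam n m eI KK).Ω | ∀ j ∈ J, (fam n m eI KK).X j ω = x j}
      = ∏ a, Ncnt (KK a) J (fun i => x i a) := by
  have h1 := card_pi_subtype n m (fun a h => Npred (KK a) J (fun i => x i a) (fun i => h (eI i)))
  have h2 := h1.trans (Finset.prod_congr rfl (fun a _ => card_reindex n eI (KK a) J (fun i => x i a)))
  refine Eq.trans ?_ h2
  apply Nat.card_congr
  refine (Equiv.subtypeSubtypeEquivSubtypeInter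
    (famPred n m eI KK)
    (fun g => ∀ j ∈ J, (fun a => g a (eI j)) = x j)).trans (Equiv.subtypeEquivRight ?_)
  intro g
  constructor
  · rintro ⟨hbase, hx⟩ a
    exact ⟨(hbase a).1, (hbase a).2.1, fun j hj => congrFun (hx j hj) a⟩
  · intro h
    refine ⟨fun a => ⟨(h a).1, (h a).2.1, fun j hj => absurd hj (Set.notMem_empty j)⟩, ?_⟩
    intro j hj
    funext a
    exact (h a).2.2 j hj

lemma fam_probEq (n m : ℕ) (eI : I ≃ Fin n) (KK : Fin m → Set I)
    (J : Set I) (x : I → Fin m → ZMod 2) :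
    (fam n m eI KK).probEq J x
      = ((∏ a, Ncnt (KK a) J (fun i => x i a) : ℕ) : ℝ)
        / ((∏ a, Ncnt (KK a) ∅ (fun _ => 0) : ℕ) : ℝ) := by
  unfold RandomFamily.probEq
  rw [prob_eq_card _ _ (fun _ => rfl), div_eq_mul_inv,
    fam_event_card n m eI KK J x, fam_card n m eI KK]
  rfl

end Fam

section Main

variable [Fintype I]

lemma fam_respects (n m : ℕ) (eI : I ≃ Fin n) (KK : Fin m → Set I)
    (hKK : ∀ a, (KK a).Nonempty) (J1 J2 : Set I)
    (hd : Disjoint J1 J2) (h : ∀ a, ¬ Contests (KK a) J1 J2) :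
    (fam n m eI KK).Respects J1 J2 := by
  intro x
  rw [fam_probEq n m eI KK (J1 ∪ J2) x, fam_probEq n m eI KK J1 x, fam_probEq n m eI KK J2 x]
  have hCpos : 0 < ∏ a, Ncnt (KK a) ∅ (fun _ => 0) :=
    Finset.prod_pos (fun a _ => Ncnt_pos (KK a) ∅)
  have key : (∏ a, Ncnt (KK a) ∅ (fun _ => 0)) * ∏ a, Ncnt (KK a) (J1 ∪ J2) (fun i => x i a)
      = (∏ a, Ncnt (KK a) J1 (fun i => x i a)) * ∏ a, Ncnt (KK a) J2 (fun i => x i a) := by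
    rw [← Finset.prod_mul_distrib, ← Finset.prod_mul_distrib]
    exact Finset.prod_congr rfl (fun a _ => Ncnt_mul (KK a) J1 J2 _ (hKK a) hd (h a))
  have hCne : ((∏ a, Ncnt (KK a) ∅ (fun _ => 0) : ℕ) : ℝ) ≠ 0 :=
    Nat.cast_ne_zero.2 (Nat.pos_iff_ne_zero.1 hCpos)
  rw [div_mul_div_comm, div_eq_div_iff hCne (mul_ne_zero hCne hCne)]
  have key2 : (∏ a, Ncnt (KK a) (J1 ∪ J2) (fun i => x i a))
        * ((∏ a, Ncnt (KK a) ∅ (fun _ => 0)) * ∏ a, Ncnt (KK a) ∅ (fun _ => 0))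
      = ((∏ a, Ncnt (KK a) J1 (fun i => x i a)) * ∏ a, Ncnt (KK a) J2 (fun i => x i a))
        * ∏ a, Ncnt (KK a) ∅ (fun _ => 0) := by
    rw [← key]
    ring
  exact_mod_cast key2

lemma fam_not_respects (n m : ℕ) (eI : I ≃ Fin n) (KK : Fin m → Set I)
    (J1 J2 : Set I) (hd : Disjoint J1 J2)
    (a0 : Fin m) (hc : Contests (KK a0) J1 J2) :
    ¬ (fam n m eI KK).Respects J1 J2 := by
  classical
  obtain ⟨y0, hy12, hy1, hy2⟩ := Ncnt_contests (KK a0) J1 J2 hd hc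
  intro hresp
  have hx := hresp (fun i a => if a = a0 then y0 i else 0)
  rw [fam_probEq, fam_probEq, fam_probEq] at hx
  have hP12 : ∏ a, Ncnt (KK a) (J1 ∪ J2)
      (fun i => if a = a0 then y0 i else 0) = 0 := by
    apply Finset.prod_eq_zero (Finset.mem_univ a0)
    simpa using hy12
  have hP1 : 0 < ∏ a, Ncnt (KK a) J1 (fun i => if a = a0 then y0 i else 0) := by
    apply Finset.prod_pos
    intro a _
    by_cases h : a = a0
    · subst h
      simpa using hy1
    · simp only [if_neg h]
      exact Ncnt_pos (KK a) J1
  have hP2 : 0 < ∏ a, Ncnt (KK a) J2 (fun i => if a = a0 then y0 i else 0) := by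
    apply Finset.prod_pos
    intro a _
    by_cases h : a = a0
    · subst h
      simpa using hy2
    · simp only [if_neg h]
      exact Ncnt_pos (KK a) J2
  have hCpos : 0 < ∏ a, Ncnt (KK a) ∅ (fun _ => (0 : ZMod 2)) :=
    Finset.prod_pos (fun a _ => Ncnt_pos (KK a) ∅)
  rw [hP12] at hx
  have hlhs : ((0 : ℕ) : ℝ) / ((∏ a, Ncnt (KK a) ∅ (fun _ => (0:ZMod 2)) : ℕ) : ℝ) = 0 := by
    simp
  rw [hlhs] at hx
  have hCR : (0:ℝ) < ((∏ a, Ncnt (KK a) ∅ (fun _ => (0:ZMod 2)) : ℕ) : ℝ) := by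
    exact_mod_cast hCpos
  have hP1R : (0:ℝ) < ((∏ a, Ncnt (KK a) J1 (fun i => if a = a0 then y0 i else 0) : ℕ) : ℝ) := by
    exact_mod_cast hP1
  have hP2R : (0:ℝ) < ((∏ a, Ncnt (KK a) J2 (fun i => if a = a0 then y0 i else 0) : ℕ) : ℝ) := by
    exact_mod_cast hP2
  exact (ne_of_gt (mul_pos (div_pos hP1R hCR) (div_pos hP2R hCR))) hx.symm

lemma fam_Kconn (n m : ℕ) (eI : I ≃ Fin n) (KK : Fin m → Set I)
    (hKK : ∀ a, (KK a).Nonempty) :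
    (fam n m eI KK).Kconn = Gamma (Set.range KK) := by
  ext J
  constructor
  · intro h J1 J2 hdiss
    by_contra hno
    push_neg at hno
    have hno' : ∀ a, ¬ Contests (KK a) J1 J2 := fun a => hno (KK a) ⟨a, rfl⟩
    exact h J1 J2 hdiss (fam_respects n m eI KK hKK J1 J2 hdiss.2.2.1 hno')
  · intro h J1 J2 hdiss
    obtain ⟨A, ⟨a, rfl⟩, hc⟩ := h J1 J2 hdiss
    exact fam_not_respects n m eI KK J1 J2 hdiss.2.2.1 a hc

lemma gamma_eq {𝒦 : Set (Set I)} (h𝒦 : IsConnectivity 𝒦) :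
    Gamma {K | K ∈ 𝒦 ∧ 2 ≤ K.ncard} = 𝒦 := by
  apply Set.Subset.antisymm
  · intro B hB
    by_cases hBe : B = ∅
    · rw [hBe]
      exact h𝒦.1
    obtain ⟨i0, hi0⟩ := Set.nonempty_iff_ne_empty.2 hBe
    set S : Set (Set I) := {C | C ∈ 𝒦 ∧ C ⊆ B ∧ C.Nonempty} with hS
    have hSne : S.Nonempty :=
      ⟨{i0}, h𝒦.2.1 i0, Set.singleton_subset_iff.2 hi0, Set.singleton_nonempty _⟩
    obtain ⟨C, hCS, hCmax⟩ := Set.Finite.exists_maximalFor id S (Set.toFinite S) hSne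
    by_cases hCB : C = B
    · rw [← hCB]
      exact hCS.1
    have hBC : ¬ B ⊆ C := fun hsub => hCB (Set.Subset.antisymm hCS.2.1 hsub)
    have hdiff : (B \ C).Nonempty := Set.diff_nonempty.2 hBC
    obtain ⟨A, hA, hcont⟩ := hB C (B \ C)
      ⟨hCS.2.2, hdiff, Set.disjoint_sdiff_right, Set.union_diff_cancel hCS.2.1⟩
    have hCA : C ∪ A ∈ 𝒦 := by
      apply h𝒦.2.2 C A hCS.1 hA.1
      obtain ⟨z, hz⟩ := hcont.2.1
      exact ⟨z, hz.2, hz.1⟩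
    have hsub : C ∪ A ⊆ B := Set.union_subset hCS.2.1
      (hcont.1.trans (by rw [Set.union_diff_cancel hCS.2.1]))
    have hmem : C ∪ A ∈ S := ⟨hCA, hsub, hCS.2.2.mono Set.subset_union_left⟩
    have heq : C = C ∪ A :=
      Set.Subset.antisymm Set.subset_union_left (hCmax hmem Set.subset_union_left)
    obtain ⟨z, hzA, hzBC⟩ := hcont.2.2
    exfalso
    apply hzBC.2
    rw [heq]
    exact Or.inr hzA
  · intro K hK J1 J2 hdiss
    obtain ⟨hJ1, hJ2, hd, hun⟩ := hdiss
    obtain ⟨a, ha⟩ := hJ1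
    obtain ⟨b, hb⟩ := hJ2
    have haK : a ∈ K := by
      rw [← hun]
      exact Or.inl ha
    have hbK : b ∈ K := by
      rw [← hun]
      exact Or.inr hb
    refine ⟨K, ⟨hK, ?_⟩, ?_⟩
    · have h2 : 1 < K.ncard := (Set.one_lt_ncard_iff (Set.toFinite K)).2
        ⟨a, b, haK, hbK, fun hab => (hd.ne_of_mem ha hb) hab⟩
      omega
    · exact ⟨le_of_eq hun.symm, ⟨a, haK, ha⟩, ⟨b, hbK, hb⟩⟩

end Main

/-- every integral connectivity structure on a finite nonempty set `I`
is the connectivity structure of some random family on `I`. -/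
theorem stmt18 {I : Type u} [Fintype I] [Nonempty I] (𝒦 : Set (Set I))
    (h𝒦 : IsConnectivity 𝒦) :
    ∃ φ : RandomFamily I, φ.Kconn = 𝒦 := by
  classical
  obtain ⟨m, KKemb, hrange⟩ := (Set.toFinite {K : Set I | K ∈ 𝒦 ∧ 2 ≤ K.ncard}).fin_embedding
  have hKK : ∀ a, ((KKemb : Fin m → Set I) a).Nonempty := by
    intro a
    have hmem : KKemb a ∈ {K : Set I | K ∈ 𝒦 ∧ 2 ≤ K.ncard} := by
      rw [← hrange]
      exact Set.mem_range_self a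
    have h2 := hmem.2
    rcases Set.eq_empty_or_nonempty (KKemb a : Set I) with he | hne
    · rw [he] at h2
      simp at h2
    · exact hne
  refine ⟨fam (Fintype.card I) m (Fintype.equivFin I) (KKemb : Fin m → Set I), ?_⟩
  rw [fam_Kconn _ _ _ _ hKK, hrange, gamma_eq h𝒦]
end

section
/- For every integral connectivity structure 𝒦 on a finite nonempty set I, there exist infinitely many pairwise distinct random families φ on I such that K_φ = 𝒦. -/
universe u

variable {I : Type u}

/-! ### Auxiliary development -/

section CountLemmas

open Finset

variable {α : Type*} [Fintype α] [DecidableEq α]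

private lemma sum_constr (A : Finset α) (a : α → ZMod 2) (r : ℝ) :
    ∑ g : α → ZMod 2, (if ∀ j ∈ A, g j = a j then r else 0)
      = 2 ^ (Fintype.card α - A.card) * r := by
  classical
  rw [← Equiv.sum_comp (Equiv.piEquivPiSubtypeProd (· ∈ A) (fun _ => ZMod 2)).symm]
  rw [Fintype.sum_prod_type]
  have hiff : ∀ (u : {x // x ∈ A} → ZMod 2) (v : {x // ¬ x ∈ A} → ZMod 2),
      (∀ j ∈ A, (Equiv.piEquivPiSubtypeProd (· ∈ A) (fun _ => ZMod 2)).symm (u, v) j = a j)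
        ↔ u = (fun j => a j.1) := by
    intro u v
    simp only [Equiv.piEquivPiSubtypeProd_symm_apply]
    constructor
    · intro h; funext j; have := h j.1 j.2; rwa [dif_pos j.2] at this
    · intro h j hj; rw [dif_pos hj, h]
  have step1 : ∀ u : {x // x ∈ A} → ZMod 2,
      (∑ v : {x // ¬ x ∈ A} → ZMod 2,
        if ∀ j ∈ A, (Equiv.piEquivPiSubtypeProd (· ∈ A) (fun _ => ZMod 2)).symm (u, v) j = a j
          then r else 0)
      = if u = (fun j => a j.1) then (2 : ℝ) ^ (Fintype.card α - A.card) * r else 0 := by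
    intro u
    have : ∀ v : {x // ¬ x ∈ A} → ZMod 2,
        (if ∀ j ∈ A, (Equiv.piEquivPiSubtypeProd (· ∈ A) (fun _ => ZMod 2)).symm (u, v) j = a j
          then r else 0) = if u = (fun j => a j.1) then r else 0 := by
      intro v; exact if_congr (hiff u v) rfl rfl
    rw [Finset.sum_congr rfl (fun v _ => this v), Finset.sum_const, Finset.card_univ,
      nsmul_eq_mul]
    have hcard : Fintype.card ({x // ¬ x ∈ A} → ZMod 2) = 2 ^ (Fintype.card α - A.card) := by
      rw [Fintype.card_fun, ZMod.card, Fintype.card_subtype_compl, Fintype.card_coe]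
    rw [hcard]
    split_ifs <;> push_cast <;> ring
  rw [Finset.sum_congr rfl (fun u _ => step1 u)]
  simp

private lemma sum_constr_univ (a : α → ZMod 2) (c : ZMod 2) (r : ℝ) :
    ∑ g : α → ZMod 2, (if (∀ j ∈ (univ : Finset α), g j = a j) ∧ ∑ j, g j = c then r else 0)
      = if ∑ j, a j = c then r else 0 := by
  classical
  have key : ∀ g : α → ZMod 2,
      (if (∀ j ∈ (univ : Finset α), g j = a j) ∧ ∑ j, g j = c then r else 0)
        = if g = a then (if ∑ j, a j = c then r else 0) else 0 := by
    intro g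
    by_cases hg : g = a
    · subst hg; simp
    · rw [if_neg hg, if_neg]
      rintro ⟨h1, -⟩
      exact hg (funext fun j => h1 j (mem_univ j))
  rw [Finset.sum_congr rfl (fun g _ => key g), Finset.sum_ite_eq' univ a]
  simp

private lemma sum_constr_sum (A : Finset α) (hA : A ≠ univ) (a : α → ZMod 2) (c : ZMod 2)
    (r : ℝ) :
    ∑ g : α → ZMod 2, (if (∀ j ∈ A, g j = a j) ∧ ∑ j, g j = c then r else 0)
      = 2 ^ (Fintype.card α - A.card - 1) * r := by
  classical
  obtain ⟨k₀, hk₀⟩ : ∃ k, k ∉ A := by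
    by_contra h; push_neg at h; exact hA (Finset.eq_univ_iff_forall.mpr h)
  set δ : α → ZMod 2 := fun j => if j = k₀ then 1 else 0 with hδ
  have hδsum : ∑ j, δ j = 1 := by
    rw [hδ]
    rw [Finset.sum_ite_eq' univ k₀ (fun _ => (1 : ZMod 2))]
    simp
  have hflip : ∀ c' : ZMod 2,
      (∑ g : α → ZMod 2, (if (∀ j ∈ A, g j = a j) ∧ ∑ j, g j = c' then r else 0))
      = ∑ g : α → ZMod 2, (if (∀ j ∈ A, g j = a j) ∧ ∑ j, g j = c' + 1 then r else 0) := by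
    intro c'
    have hre := Equiv.sum_comp (Equiv.addRight δ)
      (fun g : α → ZMod 2 => if (∀ j ∈ A, g j = a j) ∧ ∑ j, g j = c' then r else 0)
    rw [← hre]
    apply Finset.sum_congr rfl
    intro g _
    apply if_congr _ rfl rfl
    have h1 : (∀ j ∈ A, (Equiv.addRight δ g) j = a j) ↔ (∀ j ∈ A, g j = a j) := by
      constructor <;> intro h j hj <;> have hne : j ≠ k₀ := fun he => hk₀ (he ▸ hj)
      · have := h j hj
        simpa [Equiv.addRight, hδ, hne] using this
      · simp only [Equiv.coe_addRight, Pi.add_apply]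
        rw [h j hj, hδ]
        simp [hne]
    have h2 : (∑ j, (Equiv.addRight δ g) j = c') ↔ (∑ j, g j = c' + 1) := by
      simp only [Equiv.coe_addRight, Pi.add_apply]
      rw [Finset.sum_add_distrib, hδsum]
      have key : ∀ z w : ZMod 2, (z + 1 = w) ↔ (z = w + 1) := by decide
      exact key _ _
    rw [h1, h2]
  have hsplit :
      (∑ g : α → ZMod 2, (if (∀ j ∈ A, g j = a j) ∧ ∑ j, g j = c then r else 0))
      + (∑ g : α → ZMod 2, (if (∀ j ∈ A, g j = a j) ∧ ∑ j, g j = c + 1 then r else 0))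
      = 2 ^ (Fintype.card α - A.card) * r := by
    rw [← Finset.sum_add_distrib, ← sum_constr A a r]
    apply Finset.sum_congr rfl
    intro g _
    by_cases hg : ∀ j ∈ A, g j = a j
    · by_cases hsum : ∑ j, g j = c
      · have key : ∀ w : ZMod 2, ¬ w = w + 1 := by decide
        have hne : ¬ (∑ j, g j = c + 1) := by rw [hsum]; exact key c
        simp [hg, hsum, hne]
      · have key : ∀ z w : ZMod 2, ¬ z = w → z = w + 1 := by decide
        have heq : ∑ j, g j = c + 1 := key _ _ hsum
        simp [hg, hsum, heq]
    · simp [hg]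
  have hlt : A.card < Fintype.card α := by
    have : A ⊂ univ := Finset.ssubset_univ_iff.mpr hA
    simpa [Finset.card_univ] using Finset.card_lt_card this
  have hpow : (2 : ℝ) ^ (Fintype.card α - A.card)
      = 2 * 2 ^ (Fintype.card α - A.card - 1) := by
    rw [← pow_succ']
    congr 1
    omega
  have hsplit' :
      (∑ g : α → ZMod 2, (if (∀ j ∈ A, g j = a j) ∧ ∑ j, g j = c then r else 0))
      + (∑ g : α → ZMod 2, (if (∀ j ∈ A, g j = a j) ∧ ∑ j, g j = c + 1 then r else 0))
      = 2 * (2 ^ (Fintype.card α - A.card - 1) * r) := by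
    rw [hsplit, hpow]; ring
  have hfc := hflip c
  linarith

end CountLemmas


section BlockFamily

open Finset

variable {I : Type u} [DecidableEq I]

private lemma sum_reindex [Fintype I] (F : (I → ZMod 2) → ℝ) :
    ∑ g : Fin (Fintype.card I) → ZMod 2, F (fun i => g (Fintype.equivFin I i))
      = ∑ h : I → ZMod 2, F h := by
  rw [← Equiv.sum_comp (Equiv.arrowCongr (Fintype.equivFin I) (Equiv.refl (ZMod 2)))
      (fun g : Fin (Fintype.card I) → ZMod 2 => F (fun i => g (Fintype.equivFin I i)))]
  apply Finset.sum_congr rfl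
  intro h _
  congr 1
  funext i
  simp [Equiv.arrowCongr]

open Classical in
noncomputable def blockFamily [Fintype I] (K : Finset I) : RandomFamily I where
  Ω := Fin (Fintype.card I) → ZMod 2
  fintΩ := inferInstance
  P g := if (∀ i, i ∉ K → g (Fintype.equivFin I i) = 0)
            ∧ ∑ i, g (Fintype.equivFin I i) = 0 then ((2 : ℝ) ^ (K.card - 1))⁻¹ else 0
  P_nonneg g := by split <;> positivity
  P_total := by
    classical
    rw [sum_reindex (fun h : I → ZMod 2 =>
      if (∀ i, i ∉ K → h i = 0) ∧ ∑ i, h i = 0 then ((2 : ℝ) ^ (K.card - 1))⁻¹ else 0)]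
    have hrw : ∀ g : I → ZMod 2,
        (if (∀ i, i ∉ K → g i = 0) ∧ ∑ i, g i = 0 then ((2 : ℝ) ^ (K.card - 1))⁻¹ else 0)
          = (if (∀ i ∈ Kᶜ, g i = (fun _ => (0 : ZMod 2)) i) ∧ ∑ i, g i = 0
              then ((2 : ℝ) ^ (K.card - 1))⁻¹ else 0) := by
      intro g
      apply if_congr _ rfl rfl
      simp [Finset.mem_compl]
    rw [Finset.sum_congr rfl (fun g _ => hrw g)]
    rcases eq_or_ne K ∅ with rfl | hK
    · rw [show (∅ : Finset I)ᶜ = univ from by simp, sum_constr_univ]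
      simp
    · have h1 : Kᶜ ≠ univ := by
        simp only [ne_eq, Finset.compl_eq_univ_iff]
        exact hK
      rw [sum_constr_sum _ h1]
      have hc : Fintype.card I - Kᶜ.card - 1 = K.card - 1 := by
        have h2 : Kᶜ.card = Fintype.card I - K.card := Finset.card_compl K
        have h3 : K.card ≤ Fintype.card I := K.card_le_univ
        have h4 : 1 ≤ K.card := Finset.card_pos.mpr (Finset.nonempty_iff_ne_empty.mpr hK)
        omega
      rw [hc]
      exact mul_inv_cancel₀ (by positivity)
  R _ := ZMod 2
  fintR _ := inferInstance
  X i g := g (Fintype.equivFin I i)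

open Classical in
noncomputable def qval [Fintype I] (K : Finset I) (J : Set I) (x : I → ZMod 2) : ℝ :=
  (if ∀ j ∈ J, j ∉ K → x j = 0 then 1 else 0) *
    (if (K : Set I) ⊆ J then
        (if ∑ j ∈ K, x j = 0 then ((2 : ℝ) ^ (K.card - 1))⁻¹ else 0)
      else ((2 : ℝ) ^ (J ∩ (K : Set I)).ncard)⁻¹)

open Classical in
private lemma probEq_eq_sumI [Fintype I] (K : Finset I) (J : Set I) (x : I → ZMod 2) :
    (blockFamily K).probEq J x
      = ∑ g : I → ZMod 2, (if ∀ j ∈ J, g j = x j then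
          (if (∀ i, i ∉ K → g i = 0) ∧ ∑ i, g i = 0 then ((2 : ℝ) ^ (K.card - 1))⁻¹ else 0)
        else 0) := by
  classical
  unfold RandomFamily.probEq RandomFamily.prob
  simp only [Set.indicator_apply, Set.mem_setOf_eq, blockFamily]
  exact sum_reindex (fun h : I → ZMod 2 => if ∀ j ∈ J, h j = x j then
    (if (∀ i, i ∉ K → h i = 0) ∧ ∑ i, h i = 0 then ((2 : ℝ) ^ (K.card - 1))⁻¹ else 0) else 0)

open Classical in
lemma probEq_blockFamily [Fintype I] (K : Finset I) (J : Set I) (x : I → ZMod 2) :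
    (blockFamily K).probEq J x = qval K J x := by
  classical
  rw [probEq_eq_sumI, qval]
  by_cases hcpt : ∀ j ∈ J, j ∉ K → x j = 0
  · -- compatible case
    set A : Finset I := Kᶜ ∪ K.filter (fun j => j ∈ J) with hA
    set b : I → ZMod 2 := fun j => if j ∈ J then x j else 0 with hb
    have hcond : ∀ g : I → ZMod 2,
        ((∀ j ∈ J, g j = x j) ∧ ((∀ i, i ∉ K → g i = 0) ∧ ∑ i, g i = 0))
          ↔ ((∀ j ∈ A, g j = b j) ∧ ∑ i, g i = 0) := by
      intro g
      constructor
      · rintro ⟨h1, h2, h3⟩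
        refine ⟨?_, h3⟩
        intro j hj
        rcases Finset.mem_union.mp hj with hj' | hj'
        · have hjK : j ∉ K := Finset.mem_compl.mp hj'
          by_cases hjJ : j ∈ J
          · have hbj : b j = x j := by simp [hb, hjJ]
            rw [h2 j hjK, hbj]
            exact (hcpt j hjJ hjK).symm
          · have hbj : b j = 0 := by simp [hb, hjJ]
            rw [h2 j hjK, hbj]
        · have hjJ : j ∈ J := (Finset.mem_filter.mp hj').2
          have hbj : b j = x j := by simp [hb, hjJ]
          rw [h1 j hjJ, hbj]
      · rintro ⟨h1, h3⟩
        refine ⟨?_, ?_, h3⟩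
        · intro j hjJ
          have hbj : b j = x j := by simp [hb, hjJ]
          by_cases hjK : j ∈ K
          · have hjA : j ∈ A := Finset.mem_union_right _ (Finset.mem_filter.mpr ⟨hjK, hjJ⟩)
            rw [h1 j hjA, hbj]
          · have hjA : j ∈ A := Finset.mem_union_left _ (Finset.mem_compl.mpr hjK)
            rw [h1 j hjA, hbj]
        · intro i hiK
          have hiA : i ∈ A := Finset.mem_union_left _ (Finset.mem_compl.mpr hiK)
          rw [h1 i hiA]
          by_cases hiJ : i ∈ J
          · have hbj : b i = x i := by simp [hb, hiJ]
            rw [hbj]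
            exact hcpt i hiJ hiK
          · simp [hb, hiJ]
    have hmerge : ∀ g : I → ZMod 2,
        (if ∀ j ∈ J, g j = x j then
            (if (∀ i, i ∉ K → g i = 0) ∧ ∑ i, g i = 0 then ((2 : ℝ) ^ (K.card - 1))⁻¹ else 0)
          else 0)
          = (if (∀ j ∈ A, g j = b j) ∧ ∑ i, g i = 0 then ((2 : ℝ) ^ (K.card - 1))⁻¹ else 0) := by
      intro g
      rw [← ite_and]
      exact if_congr (hcond g) rfl rfl
    rw [Finset.sum_congr rfl (fun g _ => hmerge g)]
    rw [if_pos hcpt, one_mul]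
    by_cases hKJ : (K : Set I) ⊆ J
    · have hfilter : K.filter (fun j => j ∈ J) = K := by
        apply Finset.filter_true_of_mem
        intro j hj
        exact hKJ (Finset.mem_coe.mpr hj)
      have hAuniv : A = univ := by
        rw [hA, hfilter]
        ext i
        simp only [Finset.mem_union, Finset.mem_compl, Finset.mem_univ, iff_true]
        tauto
      rw [hAuniv, sum_constr_univ, if_pos hKJ]
      have hsum : ∑ j, b j = ∑ j ∈ K, x j := by
        rw [hb, ← Finset.sum_filter]
        symm
        apply Finset.sum_subset
        · intro j hj
          exact Finset.mem_filter.mpr ⟨Finset.mem_univ j, hKJ (Finset.mem_coe.mpr hj)⟩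
        · intro j hj hjK
          exact hcpt j (Finset.mem_filter.mp hj).2 hjK
      rw [hsum]
    · have hAne : A ≠ univ := by
        obtain ⟨k, hkK, hkJ⟩ : ∃ k, k ∈ K ∧ k ∉ J := by
          by_contra h
          push_neg at h
          exact hKJ (fun k hk => h k (Finset.mem_coe.mp hk))
        intro h
        have hkA : k ∈ A := h ▸ Finset.mem_univ k
        rcases Finset.mem_union.mp hkA with h' | h'
        · exact (Finset.mem_compl.mp h') hkK
        · exact hkJ (Finset.mem_filter.mp h').2
      rw [sum_constr_sum _ hAne, if_neg hKJ]
      set m := (K.filter (fun j => j ∈ J)).card with hm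
      have hncard : (J ∩ (K : Set I)).ncard = m := by
        rw [hm]
        have hset : J ∩ (K : Set I) = ↑(K.filter (fun j => j ∈ J)) := by
          ext j
          simp only [Set.mem_inter_iff, Finset.coe_filter, Set.mem_setOf_eq, Finset.mem_coe]
          tauto
        rw [hset, Set.ncard_coe_finset]
      rw [hncard]
      have hdisj : Disjoint (Kᶜ) (K.filter (fun j => j ∈ J)) := by
        rw [Finset.disjoint_left]
        intro j hj hj'
        exact (Finset.mem_compl.mp hj) (Finset.mem_filter.mp hj').1
      have hAcard : A.card = (Fintype.card I - K.card) + m := by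
        rw [hA, Finset.card_union_of_disjoint hdisj, Finset.card_compl]
      have hmlt : m < K.card := by
        have hle : m ≤ K.card := Finset.card_le_card (Finset.filter_subset _ _)
        rcases lt_or_eq_of_le hle with h | h
        · exact h
        · exfalso
          have hfin : K.filter (fun j => j ∈ J) = K :=
            Finset.eq_of_subset_of_card_le (Finset.filter_subset _ _) (le_of_eq h.symm)
          apply hKJ
          intro k hk
          have hk' : k ∈ K := Finset.mem_coe.mp hk
          have hk2 : k ∈ K.filter (fun j => j ∈ J) := by rw [hfin]; exact hk'
          exact (Finset.mem_filter.mp hk2).2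
      have hKle : K.card ≤ Fintype.card I := K.card_le_univ
      have hexp : Fintype.card I - A.card - 1 = K.card - m - 1 := by omega
      rw [hexp]
      have hpow : (2 : ℝ) ^ (K.card - 1) = 2 ^ (K.card - m - 1) * 2 ^ m := by
        rw [← pow_add]
        congr 1
        omega
      rw [hpow, mul_inv, ← mul_assoc, mul_inv_cancel₀ (by positivity), one_mul]
  · -- incompatible case: both sides vanish
    rw [if_neg hcpt, zero_mul]
    apply Finset.sum_eq_zero
    intro g _
    push_neg at hcpt
    obtain ⟨j₀, hj₀J, hj₀K, hx0⟩ := hcpt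
    by_cases hE : ∀ j ∈ J, g j = x j
    · rw [if_pos hE, if_neg]
      rintro ⟨h2, -⟩
      exact hx0 ((hE j₀ hj₀J).symm.trans (h2 j₀ hj₀K))
    · rw [if_neg hE]

end BlockFamily


section QLemmas

open Finset
open Classical

variable {I : Type u} [DecidableEq I]

open Classical in
noncomputable def qcpt (K : Finset I) (J : Set I) (x : I → ZMod 2) : ℝ :=
  if ∀ j ∈ J, j ∉ K → x j = 0 then 1 else 0

open Classical in
noncomputable def qmain [Fintype I] (K : Finset I) (J : Set I) (x : I → ZMod 2) : ℝ :=
  if (K : Set I) ⊆ J then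
      (if ∑ j ∈ K, x j = 0 then ((2 : ℝ) ^ (K.card - 1))⁻¹ else 0)
    else ((2 : ℝ) ^ (J ∩ (K : Set I)).ncard)⁻¹

lemma qval_eq [Fintype I] (K : Finset I) (J : Set I) (x : I → ZMod 2) :
    qval K J x = qcpt K J x * qmain K J x := by
  unfold qval qcpt qmain
  congr!

lemma qcpt_mul (K : Finset I) (J1 J2 : Set I) (x : I → ZMod 2) :
    qcpt K (J1 ∪ J2) x = qcpt K J1 x * qcpt K J2 x := by
  unfold qcpt
  by_cases h1 : ∀ j ∈ J1, j ∉ K → x j = 0 <;>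
    by_cases h2 : ∀ j ∈ J2, j ∉ K → x j = 0
  · rw [if_pos h1, if_pos h2, if_pos, mul_one]
    rintro j (hj | hj) hjK
    · exact h1 j hj hjK
    · exact h2 j hj hjK
  · rw [if_pos h1, if_neg h2, if_neg, mul_zero]
    intro h
    exact h2 (fun j hj hjK => h j (Or.inr hj) hjK)
  · rw [if_neg h1, if_neg, zero_mul]
    intro h
    exact h1 (fun j hj hjK => h j (Or.inl hj) hjK)
  · rw [if_neg h1, if_neg, zero_mul]
    intro h
    exact h1 (fun j hj hjK => h j (Or.inl hj) hjK)

private lemma qmain_aux [Fintype I] (K : Finset I) (J1 J2 : Set I) (x : I → ZMod 2)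
    (h2 : ∀ j ∈ J2, j ∉ K) :
    qmain K (J1 ∪ J2) x = qmain K J1 x * qmain K J2 x := by
  unfold qmain
  have hJJ : (J1 ∪ J2) ∩ (K : Set I) = J1 ∩ (K : Set I) := by
    ext j
    simp only [Set.mem_inter_iff, Set.mem_union]
    constructor
    · rintro ⟨h | h, hk⟩
      · exact ⟨h, hk⟩
      · exact absurd (Finset.mem_coe.mp hk) (h2 j h)
    · rintro ⟨h, hk⟩
      exact ⟨Or.inl h, hk⟩
  have hJ2K : J2 ∩ (K : Set I) = ∅ := by
    ext j
    simp only [Set.mem_inter_iff, Set.mem_empty_iff_false, iff_false, not_and]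
    intro hj hk
    exact h2 j hj (Finset.mem_coe.mp hk)
  rcases eq_or_ne K ∅ with rfl | hKne
  · simp
  · obtain ⟨k, hk⟩ := Finset.nonempty_iff_ne_empty.mpr hKne
    have hK2 : ¬ (K : Set I) ⊆ J2 := by
      intro hsub
      exact h2 k (hsub (Finset.mem_coe.mpr hk)) hk
    rw [if_neg hK2, hJ2K]
    simp only [Set.ncard_empty, pow_zero, inv_one, mul_one]
    by_cases hK1 : (K : Set I) ⊆ J1
    · have hK12 : (K : Set I) ⊆ J1 ∪ J2 := hK1.trans Set.subset_union_left
      rw [if_pos hK12, if_pos hK1]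
    · have hK12 : ¬ (K : Set I) ⊆ J1 ∪ J2 := by
        intro h
        apply hK1
        intro j hj
        rcases h hj with hj' | hj'
        · exact hj'
        · exact absurd (Finset.mem_coe.mp hj) (h2 j hj')
      rw [if_neg hK12, if_neg hK1, hJJ]

lemma qmain_mul [Fintype I] (K : Finset I) (J1 J2 : Set I) (x : I → ZMod 2)
    (hd : Disjoint J1 J2)
    (h : ¬((K : Set I) ⊆ J1 ∪ J2 ∧ (J1 ∩ (K : Set I)).Nonempty ∧ (J2 ∩ (K : Set I)).Nonempty)) :
    qmain K (J1 ∪ J2) x = qmain K J1 x * qmain K J2 x := by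
  by_cases hsub : (K : Set I) ⊆ J1 ∪ J2
  · have hne : ¬ ((J1 ∩ (K : Set I)).Nonempty ∧ (J2 ∩ (K : Set I)).Nonempty) := by
      intro hc
      exact h ⟨hsub, hc⟩
    rw [not_and_or] at hne
    rcases hne with hne | hne
    · rw [Set.not_nonempty_iff_eq_empty] at hne
      have h1 : ∀ j ∈ J1, j ∉ K := by
        intro j hj hjK
        exact absurd (Set.mem_inter hj (Finset.mem_coe.mpr hjK)) (hne ▸ Set.notMem_empty j)
      rw [Set.union_comm, mul_comm]
      exact qmain_aux K J2 J1 x h1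
    · rw [Set.not_nonempty_iff_eq_empty] at hne
      have h2 : ∀ j ∈ J2, j ∉ K := by
        intro j hj hjK
        exact absurd (Set.mem_inter hj (Finset.mem_coe.mpr hjK)) (hne ▸ Set.notMem_empty j)
      exact qmain_aux K J1 J2 x h2
  · unfold qmain
    have hs1 : ¬ (K : Set I) ⊆ J1 := fun h' => hsub (h'.trans Set.subset_union_left)
    have hs2 : ¬ (K : Set I) ⊆ J2 := fun h' => hsub (h'.trans Set.subset_union_right)
    rw [if_neg hsub, if_neg hs1, if_neg hs2]
    have hfu : (J1 ∪ J2) ∩ (K : Set I) = (J1 ∩ (K : Set I)) ∪ (J2 ∩ (K : Set I)) :=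
      Set.union_inter_distrib_right J1 J2 (K : Set I)
    have hfd : Disjoint (J1 ∩ (K : Set I)) (J2 ∩ (K : Set I)) :=
      hd.mono Set.inter_subset_left Set.inter_subset_left
    rw [hfu, Set.ncard_union_eq hfd (Set.toFinite _) (Set.toFinite _), pow_add, mul_inv]

lemma qval_mul [Fintype I] (K : Finset I) (J1 J2 : Set I) (x : I → ZMod 2)
    (hd : Disjoint J1 J2)
    (h : ¬((K : Set I) ⊆ J1 ∪ J2 ∧ (J1 ∩ (K : Set I)).Nonempty ∧ (J2 ∩ (K : Set I)).Nonempty)) :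
    qval K (J1 ∪ J2) x = qval K J1 x * qval K J2 x := by
  rw [qval_eq, qval_eq, qval_eq, qcpt_mul K J1 J2 x, qmain_mul K J1 J2 x hd h]
  ring

lemma qval_pos [Fintype I] (K : Finset I) (J : Set I) (x : I → ZMod 2)
    (hcpt : ∀ j ∈ J, j ∉ K → x j = 0)
    (hsum : (K : Set I) ⊆ J → ∑ j ∈ K, x j = 0) :
    0 < qval K J x := by
  rw [qval_eq]
  unfold qcpt qmain
  rw [if_pos hcpt, one_mul]
  by_cases hKJ : (K : Set I) ⊆ J
  · rw [if_pos hKJ, if_pos (hsum hKJ)]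
    positivity
  · rw [if_neg hKJ]
    positivity

lemma qval_zero [Fintype I] (K : Finset I) (J : Set I) (x : I → ZMod 2)
    (h1 : (K : Set I) ⊆ J) (h2 : ∑ j ∈ K, x j ≠ 0) :
    qval K J x = 0 := by
  rw [qval_eq]
  unfold qmain
  rw [if_pos h1, if_neg h2, mul_zero]

lemma qval_nonneg [Fintype I] (K : Finset I) (J : Set I) (x : I → ZMod 2) :
    0 ≤ qval K J x := by
  rw [qval_eq]
  unfold qcpt qmain
  split_ifs <;> positivity

end QLemmas


section Tensor

open Finset

variable {I : Type u}

open Classical in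
private lemma ite_all_prod {B : Type} [Fintype B] (p : B → Prop) (f : B → ℝ) :
    (if ∀ b, p b then ∏ b, f b else 0) = ∏ b, (if p b then f b else 0) := by
  classical
  by_cases h : ∀ b, p b
  · rw [if_pos h]
    apply Finset.prod_congr rfl
    intro b _
    rw [if_pos (h b)]
  · rw [if_neg h]
    push_neg at h
    obtain ⟨b₀, hb₀⟩ := h
    symm
    exact Finset.prod_eq_zero (Finset.mem_univ b₀) (if_neg hb₀)

/-- Indexed tensor product of finitely many random families. -/
noncomputable def bigTensor {B : Type} [Fintype B] [DecidableEq B] (ψ : B → RandomFamily I) :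
    RandomFamily I where
  Ω := ∀ b, (ψ b).Ω
  fintΩ := inferInstance
  P ω := ∏ b, (ψ b).P (ω b)
  P_nonneg ω := Finset.prod_nonneg fun b _ => (ψ b).P_nonneg _
  P_total := by
    classical
    show (∑ ω : ∀ b, (ψ b).Ω, ∏ b, (ψ b).P (ω b)) = 1
    rw [← Fintype.prod_sum (fun b (w : (ψ b).Ω) => (ψ b).P w)]
    exact Finset.prod_eq_one fun b _ => (ψ b).P_total
  R i := ∀ b, (ψ b).R i
  fintR i := inferInstance
  X i ω := fun b => (ψ b).X i (ω b)

lemma probEq_bigTensor {B : Type} [Fintype B] [DecidableEq B] (ψ : B → RandomFamily I) (J : Set I)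
    (x : ∀ i, (bigTensor ψ).R i) :
    (bigTensor ψ).probEq J x = ∏ b, (ψ b).probEq J (fun i => x i b) := by
  classical
  unfold RandomFamily.probEq RandomFamily.prob
  simp only [Set.indicator_apply, Set.mem_setOf_eq, bigTensor]
  rw [Fintype.prod_sum (fun b (w : (ψ b).Ω) =>
    if ∀ j ∈ J, (ψ b).X j w = x j b then (ψ b).P w else 0)]
  apply Finset.sum_congr rfl
  intro ω _
  have hcond : (∀ j ∈ J, (fun b => (ψ b).X j (ω b)) = x j)
      ↔ ∀ b, ∀ j ∈ J, (ψ b).X j (ω b) = x j b := by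
    constructor
    · intro h b j hj
      exact congrFun (h j hj) b
    · intro h j hj
      funext b
      exact h b j hj
  rw [if_congr hcond rfl rfl, ite_all_prod (fun b => ∀ j ∈ J, (ψ b).X j (ω b) = x j b)
    (fun b => (ψ b).P (ω b))]

end Tensor

section Inflate

variable {I : Type u}

/-- Blow up the sample space of a random family without changing the distribution. -/
noncomputable def inflate (φ : RandomFamily I) (n : ℕ) : RandomFamily I where
  Ω := φ.Ω × Fin (n + 1)
  fintΩ := inferInstance
  P p := φ.P p.1 / (n + 1)
  P_nonneg p := div_nonneg (φ.P_nonneg _) (by positivity)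
  P_total := by
    rw [Fintype.sum_prod_type]
    have h1 : ∀ ω : φ.Ω, ∑ _k : Fin (n + 1), φ.P ω / (n + 1) = φ.P ω := by
      intro ω
      rw [Finset.sum_const, Finset.card_univ, Fintype.card_fin, nsmul_eq_mul]
      field_simp
      push_cast; ring
    rw [Finset.sum_congr rfl (fun ω _ => h1 ω)]
    exact φ.P_total
  R := φ.R
  fintR := φ.fintR
  X i p := φ.X i p.1

lemma probEq_inflate (φ : RandomFamily I) (n : ℕ) (J : Set I) (x : ∀ i, φ.R i) :
    (inflate φ n).probEq J x = φ.probEq J x := by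
  classical
  unfold RandomFamily.probEq RandomFamily.prob
  simp only [Set.indicator_apply, Set.mem_setOf_eq, inflate]
  erw [Fintype.sum_prod_type]
  apply Finset.sum_congr rfl
  intro ω _
  by_cases hc : ∀ j ∈ J, φ.X j ω = x j
  · rw [if_pos hc]
    have : ∀ k : Fin (n + 1),
        (if ∀ j ∈ J, φ.X j ω = x j then φ.P ω / (n + 1) else 0) = φ.P ω / (n + 1) :=
      fun k => if_pos hc
    rw [Finset.sum_congr rfl (fun k _ => this k), Finset.sum_const, Finset.card_univ,
      Fintype.card_fin, nsmul_eq_mul]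
    field_simp
    push_cast; ring
  · rw [if_neg hc]
    apply Finset.sum_eq_zero
    intro k _
    exact if_neg hc

lemma Kconn_inflate (φ : RandomFamily I) (n : ℕ) :
    (inflate φ n).Kconn = φ.Kconn := by
  have hresp : ∀ J1 J2 : Set I, (inflate φ n).Respects J1 J2 ↔ φ.Respects J1 J2 := by
    intro J1 J2
    constructor
    · intro h x
      have hx := h x
      rwa [probEq_inflate, probEq_inflate, probEq_inflate] at hx
    · intro h x
      erw [probEq_inflate, probEq_inflate, probEq_inflate]
      exact h x
  ext J
  simp only [RandomFamily.Kconn, Set.mem_setOf_eq]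
  constructor
  · intro h J1 J2 hd hr
    exact h J1 J2 hd ((hresp J1 J2).mpr hr)
  · intro h J1 J2 hd hr
    exact h J1 J2 hd ((hresp J1 J2).mp hr)

lemma nonempty_omega (φ : RandomFamily I) : Nonempty φ.Ω := by
  by_contra h
  rw [not_nonempty_iff] at h
  have := φ.P_total
  rw [Finset.univ_eq_empty, Finset.sum_empty] at this
  exact zero_ne_one this

lemma inflate_injective (φ : RandomFamily I) : Function.Injective (inflate φ) := by
  intro n m h
  have hΩ : (inflate φ n).Ω = (inflate φ m).Ω := congrArg RandomFamily.Ω h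
  have hcard : Fintype.card (inflate φ n).Ω = Fintype.card (inflate φ m).Ω :=
    Fintype.card_congr' hΩ
  have hn : Fintype.card (inflate φ n).Ω = Fintype.card φ.Ω * (n + 1) := by
    show Fintype.card (φ.Ω × Fin (n + 1)) = _
    rw [Fintype.card_prod, Fintype.card_fin]
  have hm : Fintype.card (inflate φ m).Ω = Fintype.card φ.Ω * (m + 1) := by
    show Fintype.card (φ.Ω × Fin (m + 1)) = _
    rw [Fintype.card_prod, Fintype.card_fin]
  rw [hn, hm] at hcard
  have hpos : 0 < Fintype.card φ.Ω := Fintype.card_pos_iff.mpr (nonempty_omega φ)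
  have := Nat.eq_of_mul_eq_mul_left hpos hcard
  omega

end Inflate


section Main

open Finset

variable {I : Type u}

open Classical in
lemma exists_family [Fintype I] (𝒦 : Set (Set I)) (h𝒦 : IsConnectivity 𝒦) :
    ∃ φ : RandomFamily I, φ.Kconn = 𝒦 := by
  classical
  set e : Finset I ≃ Fin (Fintype.card (Finset I)) := Fintype.equivFin (Finset I) with he
  -- the block of a finite set: itself if it is a member of 𝒦 with ≥ 2 elements
  set Kf : Finset I → Finset I :=
    fun b => if (↑b ∈ 𝒦 ∧ 2 ≤ b.card) then b else ∅ with hKf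
  refine ⟨bigTensor (fun k : Fin (Fintype.card (Finset I)) => blockFamily (Kf (e.symm k))), ?_⟩
  ext J
  simp only [RandomFamily.Kconn, Set.mem_setOf_eq]
  constructor
  · -- J ∈ Kconn φ → J ∈ 𝒦, by contraposition
    intro hJ
    by_contra hJK
    have hJne : J.Nonempty := by
      rcases Set.eq_empty_or_nonempty J with rfl | h
      · exact absurd h𝒦.1 hJK
      · exact h
    obtain ⟨i0, hi0⟩ := hJne
    set S : Set (Set I) := {M : Set I | M ∈ 𝒦 ∧ M ⊆ J ∧ M.Nonempty} with hs
    have hSne : ({i0} : Set I) ∈ S :=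
      ⟨h𝒦.2.1 i0, Set.singleton_subset_iff.mpr hi0, Set.singleton_nonempty i0⟩
    obtain ⟨M, hMS, hmax⟩ :=
      Set.Finite.exists_maximalFor id S (Set.toFinite S) ⟨_, hSne⟩
    set J2 : Set I := J \ M with hJ2
    have hJ2ne : J2.Nonempty := by
      rw [hJ2]
      rcases Set.eq_empty_or_nonempty (J \ M) with he2 | h
      · exfalso
        have hsub : J ⊆ M := by
          intro j hj
          by_contra hjM
          exact (he2 ▸ Set.mem_diff_of_mem hj hjM : j ∈ (∅ : Set I))
        have : J = M := Set.Subset.antisymm hsub hMS.2.1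
        exact hJK (this ▸ hMS.1)
      · exact h
    have hdis : IsDissociation J M J2 :=
      ⟨hMS.2.2, hJ2ne, Set.disjoint_sdiff_right, Set.union_diff_cancel hMS.2.1⟩
    apply hJ M J2 hdis
    -- φ respects {M, J2}
    intro x
    rw [probEq_bigTensor, probEq_bigTensor, probEq_bigTensor, ← Finset.prod_mul_distrib]
    apply Finset.prod_congr rfl
    intro k _
    erw [probEq_blockFamily, probEq_blockFamily, probEq_blockFamily]
    apply qval_mul _ _ _ _ hdis.2.2.1
    set b : Finset I := e.symm k with hbdef
    rintro ⟨hsub, ⟨m, hmM, hmK⟩, ⟨j, hjJ2, hjK⟩⟩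
    by_cases hbK : (↑b ∈ 𝒦 ∧ 2 ≤ b.card)
    · have hKb : Kf b = b := by rw [hKf]; exact if_pos hbK
      rw [hKb] at hsub hmK hjK
      have hMb : M ∪ ↑b ∈ 𝒦 := h𝒦.2.2 M ↑b hMS.1 hbK.1 ⟨m, hmM, hmK⟩
      have hMbJ : M ∪ ↑b ⊆ J := by
        apply Set.union_subset hMS.2.1
        intro p hp
        have hp' := hsub hp
        rw [← hdis.2.2.2]
        exact hp'
      have hMbS : M ∪ ↑b ∈ S := ⟨hMb, hMbJ, hMS.2.2.mono Set.subset_union_left⟩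
      have hMeq := hmax hMbS Set.subset_union_left
      have hbM : (↑b : Set I) ⊆ M := by
        rw [id_eq, id_eq] at hMeq
        exact fun p hp => hMeq (Set.subset_union_right hp)
      exact ((Set.mem_diff j).mp hjJ2).2 (hbM hjK)
    · have hKb : Kf b = ∅ := by rw [hKf]; exact if_neg hbK
      rw [hKb] at hmK
      simp at hmK
  · -- J ∈ 𝒦 → J ∈ Kconn φ
    intro hJ𝒦 J1 J2 hdis hresp
    obtain ⟨hJ1ne, hJ2ne, hd, hunion⟩ := hdis
    obtain ⟨j1, hj1⟩ := hJ1ne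
    obtain ⟨j2, hj2⟩ := hJ2ne
    have hj1J : j1 ∈ J := hunion ▸ Set.mem_union_left J2 hj1
    have hj2J : j2 ∈ J := hunion ▸ Set.mem_union_right J1 hj2
    have hne12 : j1 ≠ j2 := fun h => Set.disjoint_left.mp hd hj1 (h ▸ hj2)
    set bJ : Finset I := (Set.toFinite J).toFinset with hbJ
    have hbJcoe : (↑bJ : Set I) = J := Set.Finite.coe_toFinset _
    have hmemJ : ∀ p, p ∈ bJ ↔ p ∈ J := fun p => Set.Finite.mem_toFinset _
    have hcard : 2 ≤ bJ.card := by
      rw [show (2 : ℕ) = 1 + 1 from rfl]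
      apply Finset.one_lt_card.mpr
      exact ⟨j1, (hmemJ j1).mpr hj1J, j2, (hmemJ j2).mpr hj2J, hne12⟩
    have hKbJ : Kf bJ = bJ := by
      rw [hKf]
      exact if_pos ⟨hbJcoe ▸ hJ𝒦, hcard⟩
    set x : I → Fin (Fintype.card (Finset I)) → ZMod 2 :=
      fun i => fun k => if e.symm k = bJ ∧ i = j1 then (1 : ZMod 2) else 0 with hx
    have hform := hresp x
    erw [probEq_bigTensor, probEq_bigTensor, probEq_bigTensor] at hform
    beta_reduce at hform
    have hsymm : e.symm (e bJ) = bJ := e.symm_apply_apply bJ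
    -- left side vanishes
    have hzero : ∏ k, (blockFamily (Kf (e.symm k))).probEq (J1 ∪ J2) (fun i => x i k) = 0 := by
      apply Finset.prod_eq_zero (Finset.mem_univ (e bJ))
      rw [probEq_blockFamily]
      apply qval_zero
      · rw [hsymm, hKbJ, hbJcoe, hunion]
      · rw [hsymm, hKbJ]
        have hterm : ∀ j ∈ bJ,
            (fun i => x i (e bJ)) j = if j = j1 then (1 : ZMod 2) else 0 := by
          intro j _
          rw [hx]
          simp [hsymm]
        rw [Finset.sum_congr rfl hterm, Finset.sum_ite_eq' bJ j1 (fun _ => (1 : ZMod 2)),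
          if_pos ((hmemJ j1).mpr hj1J)]
        decide
    -- right side is positive
    have hpos : ∀ (Jz : Set I), Jz ⊆ J → (∀ p ∈ J, p ∉ Jz) → False → True := fun _ _ _ _ => trivial
    have hpos1 : 0 < ∏ k, (blockFamily (Kf (e.symm k))).probEq J1 (fun i => x i k) := by
      apply Finset.prod_pos
      intro k _
      rw [probEq_blockFamily]
      apply qval_pos
      · intro j hjJ1 hjK
        by_cases hb : e.symm k = bJ
        · exfalso
          apply hjK
          rw [hb, hKbJ, hmemJ]
          exact hunion ▸ Set.mem_union_left J2 hjJ1
        · rw [hx]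
          simp [hb]
      · intro hsub
        by_cases hb : e.symm k = bJ
        · exfalso
          rw [hb, hKbJ, hbJcoe] at hsub
          exact Set.disjoint_left.mp hd
            (hsub (hunion ▸ Set.mem_union_right J1 hj2 : j2 ∈ J)) hj2
        · apply Finset.sum_eq_zero
          intro j _
          rw [hx]
          simp [hb]
    have hpos2 : 0 < ∏ k, (blockFamily (Kf (e.symm k))).probEq J2 (fun i => x i k) := by
      apply Finset.prod_pos
      intro k _
      rw [probEq_blockFamily]
      apply qval_pos
      · intro j hjJ2 hjK
        by_cases hb : e.symm k = bJ
        · exfalso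
          apply hjK
          rw [hb, hKbJ, hmemJ]
          exact hunion ▸ Set.mem_union_right J1 hjJ2
        · rw [hx]
          simp [hb]
      · intro hsub
        by_cases hb : e.symm k = bJ
        · exfalso
          rw [hb, hKbJ, hbJcoe] at hsub
          exact Set.disjoint_left.mp hd hj1
            (hsub (hunion ▸ Set.mem_union_left J2 hj1 : j1 ∈ J))
        · apply Finset.sum_eq_zero
          intro j _
          rw [hx]
          simp [hb]
    rw [hform] at hzero
    exact (mul_pos hpos1 hpos2).ne' hzero

end Main

/-- for every integral connectivity structure `𝒦` on a finite nonempty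
set `I`, there are infinitely many pairwise distinct random families `φ` on `I` with
`K_φ = 𝒦`. -/
theorem stmt19 {I : Type u} [Fintype I] [Nonempty I] (𝒦 : Set (Set I))
    (h𝒦 : IsConnectivity 𝒦) :
    {φ : RandomFamily I | φ.Kconn = 𝒦}.Infinite := by
  classical
  obtain ⟨φ, hφ⟩ := exists_family 𝒦 h𝒦
  apply Set.infinite_of_injective_forall_mem (inflate_injective φ)
  intro n
  simp only [Set.mem_setOf_eq]
  rw [Kconn_inflate]
  exact hφ
end
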